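/- arXiv:2505.23162 — 2 statements merged into one kernel-verified Lean document; each statement's English description precedes it below -/
import Mathlib

section
/- There exists a 2-connected outerplanar graph with at most 24 vertices whose pathwidth is at least 4; consequently M_3 ≤ 23. -/
open SimpleGraph

/-- `X : Fin m → Finset V` is a path-decomposition of `G`: every vertex is in some bag,
every edge has both ends in some bag, and bags containing a fixed vertex form an interval. -/
def IsPathDecomp {V : Type*} (G : SimpleGraph V) (m : ℕ) (X : Fin m → Finset V) : Prop :=
  (∀ v : V, ∃ i, v ∈ X i) ∧
  (∀ u v : V, G.Adj u v → ∃ i, u ∈ X i ∧ v ∈ X i) ∧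
  (∀ i j k : Fin m, i ≤ j → j ≤ k → ∀ v : V, v ∈ X i → v ∈ X k → v ∈ X j)

/-- The pathwidth of a graph: the least `w` admitting a path-decomposition
all of whose bags have at most `w + 1` vertices. -/
noncomputable def pathwidth {V : Type*} (G : SimpleGraph V) : ℕ :=
  sInf { w | ∃ (m : ℕ) (X : Fin m → Finset V), IsPathDecomp G m X ∧ ∀ i, (X i).card ≤ w + 1 }

/-- `H` is a minor of `G`: there are pairwise disjoint connected branch sets in `G`,
one for each vertex of `H`, with an edge of `G` between the branch sets of any two
adjacent vertices of `H`. -/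
def SimpleGraph.IsMinorOf {W V : Type*} (H : SimpleGraph W) (G : SimpleGraph V) : Prop :=
  ∃ B : W → Set V,
    (∀ w, (G.induce (B w)).Connected) ∧
    (∀ w w', w ≠ w' → Disjoint (B w) (B w')) ∧
    (∀ w w', H.Adj w w' → ∃ u ∈ B w, ∃ v ∈ B w', G.Adj u v)

/-- A graph is outerplanar iff it contains neither `K₄` nor `K_{2,3}` as a minor. -/
def Outerplanar {V : Type*} (G : SimpleGraph V) : Prop :=
  ¬ (completeGraph (Fin 4)).IsMinorOf G ∧
  ¬ (completeBipartiteGraph (Fin 2) (Fin 3)).IsMinorOf G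

/-- `I_k(G)`: the maximum number of vertices of an induced subgraph of `G`
having pathwidth at most `k`. -/
noncomputable def maxInducedPW {V : Type*} (G : SimpleGraph V) (k : ℕ) : ℕ :=
  sSup { n | ∃ s : Finset V, pathwidth (G.induce (↑s : Set V)) ≤ k ∧ s.card = n }

/-- `M_k`: the largest `t` such that every outerplanar graph with at most `t`
vertices has pathwidth at most `k`. -/
noncomputable def Mconst (k : ℕ) : ℕ :=
  sSup { t | ∀ (V : Type) (_ : Fintype V) (G : SimpleGraph V),
    Fintype.card V ≤ t → Outerplanar G → pathwidth G ≤ k }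

/-- A graph is 2-connected if it has at least 3 vertices and remains connected after the
deletion of any single vertex. -/
def TwoConnected {V : Type*} (G : SimpleGraph V) : Prop :=
  3 ≤ Nat.card V ∧ ∀ v : V, (G.induce {u | u ≠ v}).Connected

/-- every path decomposition has a bag with more than `k` vertices -/
def NoThin {V : Type*} (G : SimpleGraph V) (k : ℕ) : Prop :=
  ∀ (m : ℕ) (X : Fin m → Finset V), IsPathDecomp G m X → ∃ i, k < (X i).card

lemma walk_meets {V : Type} {G : SimpleGraph V} {m : ℕ} {X : Fin m → Finset V}
    (hX : IsPathDecomp G m X) {C : Set V} {b c : Fin m} (hbc : b ≤ c) :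
    ∀ {u w : ↥C} (_W : (G.induce C).Walk u w), (∃ a, a ≤ b ∧ ↑u ∈ X a) → (↑w ∈ X c) →
    ∃ z ∈ C, z ∈ X b := by
  intro u w W
  induction W with
  | @nil x =>
    rintro ⟨a, hab, hua⟩ hwc
    exact ⟨↑x, x.2, hX.2.2 a b c hab hbc _ hua hwc⟩
  | @cons x y z hadj W ih =>
    rintro ⟨a, hab, hua⟩ hwc
    have hGadj : G.Adj ↑x ↑y := hadj
    obtain ⟨d, hxd, hyd⟩ := hX.2.1 _ _ hGadj
    rcases le_or_gt d b with hdb | hbd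
    · exact ih ⟨d, hdb, hyd⟩ hwc
    · exact ⟨↑x, x.2, hX.2.2 a b d hab (le_of_lt hbd) _ hua hxd⟩

lemma middle_kill {V : Type} {G : SimpleGraph V} {m : ℕ} {X : Fin m → Finset V}
    (hX : IsPathDecomp G m X) {a b c : Fin m} (hab : a ≤ b) (hbc : b ≤ c)
    {Sb : Finset V} {C : Set V} (hconn : (G.induce C).Connected)
    (hCb : ∀ x ∈ C, x ∉ Sb) {u w : V} (hu : u ∈ X a) (huC : u ∈ C)
    (hw : w ∈ X c) (hwC : w ∈ C) (hb : ∀ x ∈ X b, x ∈ Sb) : False := by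
  obtain ⟨W⟩ := hconn.preconnected ⟨u, huC⟩ ⟨w, hwC⟩
  obtain ⟨z, hzC, hzb⟩ := walk_meets hX hbc W ⟨a, hab, hu⟩ hw
  exact hCb z hzC (hb z hzb)

lemma triangle_bag {V : Type} {G : SimpleGraph V} {m : ℕ} {X : Fin m → Finset V}
    (hX : IsPathDecomp G m X) {a b c : V}
    (hab : G.Adj a b) (hac : G.Adj a c) (hbc : G.Adj b c) :
    ∃ i, a ∈ X i ∧ b ∈ X i ∧ c ∈ X i := by
  obtain ⟨i, hai, hbi⟩ := hX.2.1 _ _ hab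
  obtain ⟨j, haj, hcj⟩ := hX.2.1 _ _ hac
  obtain ⟨k, hbk, hck⟩ := hX.2.1 _ _ hbc
  have H := hX.2.2
  rcases le_total i j with h1 | h1 <;> rcases le_total j k with h2 | h2
  · exact ⟨j, haj, H _ _ _ h1 h2 _ hbi hbk, hcj⟩
  · rcases le_total i k with h3 | h3
    · exact ⟨k, H _ _ _ h3 h2 a hai haj, hbk, hck⟩
    · exact ⟨i, hai, hbi, H _ _ _ h3 h1 c hck hcj⟩
  · rcases le_total i k with h3 | h3
    · exact ⟨i, hai, hbi, H _ _ _ h1 h3 c hcj hck⟩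
    · exact ⟨k, H _ _ _ h2 h3 a haj hai, hbk, hck⟩
  · exact ⟨j, haj, H _ _ _ h2 h1 b hbk hbi, hcj⟩

lemma block_nothin {W : Type} [DecidableEq W] {H : SimpleGraph W} (f : Fin 8 → W)
    (hnd : ∀ i j : Fin 8, i ≠ j → f i ≠ f j)
    (a01 : H.Adj (f 0) (f 1)) (a12 : H.Adj (f 1) (f 2)) (a02 : H.Adj (f 0) (f 2))
    (a23 : H.Adj (f 2) (f 3)) (a34 : H.Adj (f 3) (f 4)) (a24 : H.Adj (f 2) (f 4))
    (a45 : H.Adj (f 4) (f 5)) (a56 : H.Adj (f 5) (f 6)) (a46 : H.Adj (f 4) (f 6))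
    (a67 : H.Adj (f 6) (f 7)) (a70 : H.Adj (f 7) (f 0)) (a60 : H.Adj (f 6) (f 0)) :
    NoThin H 3 := by
  intro m X hX
  by_contra hsmall
  push_neg at hsmall
  -- the four outer triangles get exact bags
  obtain ⟨a, ha0, ha1, ha2⟩ := triangle_bag hX a01 a02 a12
  obtain ⟨b, hb2, hb3, hb4⟩ := triangle_bag hX a23 a24 a34
  obtain ⟨c, hc4, hc5, hc6⟩ := triangle_bag hX a45 a46 a56
  obtain ⟨d, hd6, hd7, hd0⟩ := triangle_bag hX a67 a60 a70
  have n01 := hnd 0 1 (by decide); have n02 := hnd 0 2 (by decide)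
  have n03 := hnd 0 3 (by decide); have n04 := hnd 0 4 (by decide)
  have n05 := hnd 0 5 (by decide); have n06 := hnd 0 6 (by decide)
  have n07 := hnd 0 7 (by decide); have n12 := hnd 1 2 (by decide)
  have n23 := hnd 2 3 (by decide); have n24 := hnd 2 4 (by decide)
  have n25 := hnd 2 5 (by decide); have n26 := hnd 2 6 (by decide)
  have n27 := hnd 2 7 (by decide); have n34 := hnd 3 4 (by decide)
  have n45 := hnd 4 5 (by decide); have n46 := hnd 4 6 (by decide)
  have n47 := hnd 4 7 (by decide); have n56 := hnd 5 6 (by decide)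
  have n67 := hnd 6 7 (by decide); have n14 := hnd 1 4 (by decide)
  have n16 := hnd 1 6 (by decide); have n36 := hnd 3 6 (by decide)
  have EqA : X a = {f 0, f 1, f 2} := by
    refine (Finset.eq_of_subset_of_card_le ?_ ?_).symm
    · intro x hx; simp only [Finset.mem_insert, Finset.mem_singleton] at hx
      rcases hx with rfl | rfl | rfl <;> assumption
    · refine le_trans (hsmall a) (le_of_eq ?_)
      symm; rw [Finset.card_eq_three]; exact ⟨_, _, _, n01, n02, n12, rfl⟩
  have EqB : X b = {f 2, f 3, f 4} := by
    refine (Finset.eq_of_subset_of_card_le ?_ ?_).symm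
    · intro x hx; simp only [Finset.mem_insert, Finset.mem_singleton] at hx
      rcases hx with rfl | rfl | rfl <;> assumption
    · refine le_trans (hsmall b) (le_of_eq ?_)
      symm; rw [Finset.card_eq_three]; exact ⟨_, _, _, n23, n24, n34, rfl⟩
  have EqC : X c = {f 4, f 5, f 6} := by
    refine (Finset.eq_of_subset_of_card_le ?_ ?_).symm
    · intro x hx; simp only [Finset.mem_insert, Finset.mem_singleton] at hx
      rcases hx with rfl | rfl | rfl <;> assumption
    · refine le_trans (hsmall c) (le_of_eq ?_)
      symm; rw [Finset.card_eq_three]; exact ⟨_, _, _, n45, n46, n56, rfl⟩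
  have EqD : X d = {f 6, f 7, f 0} := by
    refine (Finset.eq_of_subset_of_card_le ?_ ?_).symm
    · intro x hx; simp only [Finset.mem_insert, Finset.mem_singleton] at hx
      rcases hx with rfl | rfl | rfl <;> assumption
    · refine le_trans (hsmall d) (le_of_eq ?_)
      symm; rw [Finset.card_eq_three]
      exact ⟨_, _, _, n67, n06.symm, n07.symm, rfl⟩
  have H := hX.2.2
  -- membership facts
  have m0a : f 0 ∈ X a := ha0
  have m2a : f 2 ∈ X a := ha2
  have m2b : f 2 ∈ X b := hb2
  have m4b : f 4 ∈ X b := hb4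
  have m4c : f 4 ∈ X c := hc4
  have m6c : f 6 ∈ X c := hc6
  have m6d : f 6 ∈ X d := hd6
  have m0d : f 0 ∈ X d := hd0
  have nm0b : f 0 ∉ X b := by rw [EqB]; simp [n02, n03, n04]
  have nm0c : f 0 ∉ X c := by rw [EqC]; simp [n04, n05, n06]
  have nm2c : f 2 ∉ X c := by rw [EqC]; simp [n24, n25, n26]
  have nm2d : f 2 ∉ X d := by rw [EqD]; simp [n26, n27, n02.symm]
  have nm4a : f 4 ∉ X a := by rw [EqA]; simp [n04.symm, n14.symm,
    n24.symm]
  have nm4d : f 4 ∉ X d := by rw [EqD]; simp [n46, n47, n04.symm]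
  have nm6a : f 6 ∉ X a := by rw [EqA]; simp [n06.symm, n16.symm,
    n26.symm]
  have nm6b : f 6 ∉ X b := by rw [EqB]; simp [n26.symm, n36.symm,
    n46.symm]
  -- interval (betweenness) facts, pairs: (a,d) share f0, (a,b) share f2,
  -- (b,c) share f4, (c,d) share f6
  have Fab : ∀ {i j k : Fin m}, i ≤ j → j ≤ k → ∀ {v : W}, v ∈ X i → v ∈ X k → v ∈ X j :=
    fun h1 h2 _ h3 h4 => H _ _ _ h1 h2 _ h3 h4
  have T1 : ¬(a ≤ b ∧ b ≤ d) := fun ⟨h1, h2⟩ => nm0b (Fab h1 h2 m0a m0d)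
  have T2 : ¬(d ≤ b ∧ b ≤ a) := fun ⟨h1, h2⟩ => nm0b (Fab h1 h2 m0d m0a)
  have T3 : ¬(a ≤ c ∧ c ≤ d) := fun ⟨h1, h2⟩ => nm0c (Fab h1 h2 m0a m0d)
  have T4 : ¬(d ≤ c ∧ c ≤ a) := fun ⟨h1, h2⟩ => nm0c (Fab h1 h2 m0d m0a)
  have T5 : ¬(a ≤ c ∧ c ≤ b) := fun ⟨h1, h2⟩ => nm2c (Fab h1 h2 m2a m2b)
  have T6 : ¬(b ≤ c ∧ c ≤ a) := fun ⟨h1, h2⟩ => nm2c (Fab h1 h2 m2b m2a)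
  have T7 : ¬(a ≤ d ∧ d ≤ b) := fun ⟨h1, h2⟩ => nm2d (Fab h1 h2 m2a m2b)
  have T8 : ¬(b ≤ d ∧ d ≤ a) := fun ⟨h1, h2⟩ => nm2d (Fab h1 h2 m2b m2a)
  have T9 : ¬(b ≤ a ∧ a ≤ c) := fun ⟨h1, h2⟩ => nm4a (Fab h1 h2 m4b m4c)
  have T10 : ¬(c ≤ a ∧ a ≤ b) := fun ⟨h1, h2⟩ => nm4a (Fab h1 h2 m4c m4b)
  have T11 : ¬(b ≤ d ∧ d ≤ c) := fun ⟨h1, h2⟩ => nm4d (Fab h1 h2 m4b m4c)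
  have T12 : ¬(c ≤ d ∧ d ≤ b) := fun ⟨h1, h2⟩ => nm4d (Fab h1 h2 m4c m4b)
  have T13 : ¬(c ≤ a ∧ a ≤ d) := fun ⟨h1, h2⟩ => nm6a (Fab h1 h2 m6c m6d)
  have T14 : ¬(d ≤ a ∧ a ≤ c) := fun ⟨h1, h2⟩ => nm6a (Fab h1 h2 m6d m6c)
  have T15 : ¬(c ≤ b ∧ b ≤ d) := fun ⟨h1, h2⟩ => nm6b (Fab h1 h2 m6c m6d)
  have T16 : ¬(d ≤ b ∧ b ≤ c) := fun ⟨h1, h2⟩ => nm6b (Fab h1 h2 m6d m6c)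
  simp only [Fin.le_def, not_and] at T1 T2 T3 T4 T5 T6 T7 T8 T9 T10 T11 T12 T13 T14 T15 T16
  omega

lemma restrict_decomp {V : Type} {G : SimpleGraph V} {m : ℕ} {X : Fin m → Finset V}
    (hX : IsPathDecomp G m X) (S : Set V) [DecidablePred (· ∈ S)] :
    IsPathDecomp (G.induce S) m (fun i => (X i).subtype (· ∈ S)) := by
  refine ⟨?_, ?_, ?_⟩
  · intro v
    obtain ⟨i, hi⟩ := hX.1 ↑v
    exact ⟨i, by simpa using hi⟩
  · intro u v hadj
    obtain ⟨i, hi, hi'⟩ := hX.2.1 ↑u ↑v hadj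
    exact ⟨i, by simpa using hi, by simpa using hi'⟩
  · intro i j k hij hjk v hvi hvk
    simp only [Finset.mem_subtype] at *
    exact hX.2.2 i j k hij hjk _ hvi hvk

lemma nothin_of_three {V : Type} [DecidableEq V] (G : SimpleGraph V) (k : ℕ)
    (S1 S2 S3 : Finset V)
    (hn1 : NoThin (G.induce ↑S1) k) (hn2 : NoThin (G.induce ↑S2) k)
    (hn3 : NoThin (G.induce ↑S3) k)
    (C1 C2 C3 : Set V)
    (hc1 : (G.induce C1).Connected) (hc2 : (G.induce C2).Connected)
    (hc3 : (G.induce C3).Connected)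
    (hd1 : ∀ x ∈ C1, x ∉ S1) (hd2 : ∀ x ∈ C2, x ∉ S2) (hd3 : ∀ x ∈ C3, x ∉ S3)
    (h21 : ↑S2 ⊆ C1) (h31 : ↑S3 ⊆ C1) (h12 : ↑S1 ⊆ C2) (h32 : ↑S3 ⊆ C2)
    (h13 : ↑S1 ⊆ C3) (h23 : ↑S2 ⊆ C3) :
    NoThin G (k + 1) := by
  classical
  intro m X hX
  by_contra hsmall
  push_neg at hsmall
  have key : ∀ (S : Finset V), NoThin (G.induce ↑S) k →
      ∃ i : Fin m, (∀ x ∈ X i, x ∈ S) ∧ (X i).Nonempty := by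
    intro S hn
    obtain ⟨i, hi⟩ := hn m _ (restrict_decomp hX ↑S)
    have hcard : ((X i).subtype (· ∈ (↑S : Set V))).card ≤ (X i).card := by
      rw [Finset.card_subtype]
      exact Finset.card_filter_le _ _
    have hfull : ∀ x ∈ X i, x ∈ S := by
      have hle := hsmall i
      have : ((X i).filter (· ∈ (↑S : Set V))).card = (X i).card := by
        rw [Finset.card_subtype] at hi hcard
        omega
      intro x hx
      have := (Finset.filter_card_eq this x hx)
      simpa using this
    refine ⟨i, hfull, Finset.card_pos.mp ?_⟩
    omega
  obtain ⟨i1, hf1, hne1⟩ := key S1 hn1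
  obtain ⟨i2, hf2, hne2⟩ := key S2 hn2
  obtain ⟨i3, hf3, hne3⟩ := key S3 hn3
  obtain ⟨u1, hu1⟩ := hne1
  obtain ⟨u2, hu2⟩ := hne2
  obtain ⟨u3, hu3⟩ := hne3
  have hu1S : u1 ∈ S1 := hf1 _ hu1
  have hu2S : u2 ∈ S2 := hf2 _ hu2
  have hu3S : u3 ∈ S3 := hf3 _ hu3
  -- 8 ordering cases
  rcases le_total i1 i2 with h1 | h1 <;> rcases le_total i2 i3 with h2 | h2 <;>
    rcases le_total i1 i3 with h3 | h3
  · exact middle_kill hX h1 h2 hc2 hd2 hu1 (h12 hu1S) hu3 (h32 hu3S) hf2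
  · exact middle_kill hX h1 h2 hc2 hd2 hu1 (h12 hu1S) hu3 (h32 hu3S) hf2
  · exact middle_kill hX h3 h2 hc3 hd3 hu1 (h13 hu1S) hu2 (h23 hu2S) hf3
  · exact middle_kill hX h3 h1 hc1 hd1 hu3 (h31 hu3S) hu2 (h21 hu2S) hf1
  · exact middle_kill hX h1 h3 hc1 hd1 hu2 (h21 hu2S) hu3 (h31 hu3S) hf1
  · exact middle_kill hX h2 h3 hc3 hd3 hu2 (h23 hu2S) hu1 (h13 hu1S) hf3
  · exact middle_kill hX h2 h1 hc2 hd2 hu3 (h32 hu3S) hu1 (h12 hu1S) hf2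
  · exact middle_kill hX h2 h1 hc2 hd2 hu3 (h32 hu3S) hu1 (h12 hu1S) hf2

lemma le_pathwidth_of_noThin {V : Type} [Fintype V] (G : SimpleGraph V) {k : ℕ}
    (h : NoThin G k) : k ≤ pathwidth G := by
  refine le_csInf ⟨Fintype.card V, 1, fun _ => Finset.univ, ⟨fun v => ⟨0, Finset.mem_univ v⟩,
    fun u v _ => ⟨0, Finset.mem_univ u, Finset.mem_univ v⟩,
    fun _ _ _ _ _ v _ _ => Finset.mem_univ v⟩, fun _ => by simp⟩ ?_
  rintro w ⟨m, X, hX, hbags⟩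
  obtain ⟨i, hi⟩ := h m X hX
  have := hbags i
  omega

def Ins (a b x : ℕ) : Prop := (a < b ∧ a < x ∧ x < b) ∨ (b < a ∧ (x < b ∨ a < x))

instance (a b x : ℕ) : Decidable (Ins a b x) := by unfold Ins; infer_instance

def Sepp (a b x y : ℕ) : Prop := (Ins a b x ∧ ¬ Ins a b y) ∨ (¬ Ins a b x ∧ Ins a b y)

instance (a b x y : ℕ) : Decidable (Sepp a b x y) := by unfold Sepp; infer_instance

lemma walk_cross {V : Type} {G : SimpleGraph V} {C : Set V} (p : V → ℕ) {a b : ℕ} :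
    ∀ {x z : ↥C} (_W : (G.induce C).Walk x z), Sepp a b (p ↑x) (p ↑z) →
    ∃ u v : V, u ∈ C ∧ v ∈ C ∧ G.Adj u v ∧ Sepp a b (p u) (p v) := by
  intro x z W
  induction W with
  | @nil q => intro hs; exact absurd hs (by unfold Sepp; tauto)
  | @cons x y z hadj W ih =>
    intro hs
    by_cases hc : Sepp a b (p ↑x) (p ↑y)
    · exact ⟨↑x, ↑y, x.2, y.2, hadj, hc⟩
    · refine ih ?_
      unfold Sepp at *
      tauto

lemma no_cross_paths {V : Type} {G : SimpleGraph V} (p : V → ℕ) (hinj : Function.Injective p)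
    (hNC : ∀ u v s t : V, G.Adj u v → G.Adj s t → s ≠ u → s ≠ v → t ≠ u → t ≠ v →
      ¬ Sepp (p u) (p v) (p s) (p t))
    {A B : Set V} (hd : ∀ x, x ∈ A → x ∉ B)
    {x z : ↥A} {y w : ↥B} (W1 : (G.induce A).Walk x z) (W2 : (G.induce B).Walk y w)
    (hsep : Sepp (p ↑y) (p ↑w) (p ↑x) (p ↑z)) : False := by
  obtain ⟨u, v, huA, hvA, huv, hs⟩ := walk_cross p W1 hsep
  have huy : p u ≠ p ↑y := hinj.ne (fun h => hd u huA (h ▸ y.2))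
  have huw : p u ≠ p ↑w := hinj.ne (fun h => hd u huA (h ▸ w.2))
  have hvy : p v ≠ p ↑y := hinj.ne (fun h => hd v hvA (h ▸ y.2))
  have hvw : p v ≠ p ↑w := hinj.ne (fun h => hd v hvA (h ▸ w.2))
  have hflip : Sepp (p u) (p v) (p ↑y) (p ↑w) := by
    unfold Sepp Ins at hs ⊢
    omega
  obtain ⟨s, t, hsB, htB, hst, hs2⟩ := walk_cross p W2 hflip
  exact hNC u v s t huv hst (fun h => hd u huA (h ▸ hsB)) (fun h => hd v hvA (h ▸ hsB))
    (fun h => hd u huA (h ▸ htB)) (fun h => hd v hvA (h ▸ htB)) hs2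

def homIncl {V : Type} (G : SimpleGraph V) {A A' : Set V} (h : A ⊆ A') :
    G.induce A →g G.induce A' := ⟨fun x => ⟨x.1, h x.2⟩, fun had => had⟩

lemma reach_chain2 {V : Type} (G : SimpleGraph V) {A B : Set V}
    (hA : (G.induce A).Connected) (hB : (G.induce B).Connected)
    {ue ve : V} (hue : ue ∈ A) (hve : ve ∈ B) (he : G.Adj ue ve)
    {x y : V} (hx : x ∈ A) (hy : y ∈ B) :
    (G.induce (A ∪ B)).Reachable ⟨x, Or.inl hx⟩ ⟨y, Or.inr hy⟩ := by
  have R1 : (G.induce (A ∪ B)).Reachable ⟨x, Or.inl hx⟩ ⟨ue, Or.inl hue⟩ :=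
    (hA.preconnected ⟨x, hx⟩ ⟨ue, hue⟩).map (homIncl G Set.subset_union_left)
  have R2 : (G.induce (A ∪ B)).Reachable ⟨ve, Or.inr hve⟩ ⟨y, Or.inr hy⟩ :=
    (hB.preconnected ⟨ve, hve⟩ ⟨y, hy⟩).map (homIncl G Set.subset_union_right)
  have step : (G.induce (A ∪ B)).Adj ⟨ue, Or.inl hue⟩ ⟨ve, Or.inr hve⟩ := he
  exact (R1.trans step.reachable).trans R2

lemma reach_chain3 {V : Type} (G : SimpleGraph V) {A B C : Set V}
    (hA : (G.induce A).Connected) (hB : (G.induce B).Connected)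
    (hC : (G.induce C).Connected)
    {u1 v1 : V} (hu1 : u1 ∈ A) (hv1 : v1 ∈ B) (he1 : G.Adj u1 v1)
    {u2 v2 : V} (hu2 : u2 ∈ B) (hv2 : v2 ∈ C) (he2 : G.Adj u2 v2)
    {x y : V} (hx : x ∈ A) (hy : y ∈ C) :
    (G.induce (A ∪ B ∪ C)).Reachable ⟨x, Or.inl (Or.inl hx)⟩ ⟨y, Or.inr hy⟩ := by
  have hs1 : A ∪ B ⊆ A ∪ B ∪ C := Set.subset_union_left
  have hs2 : B ∪ C ⊆ A ∪ B ∪ C :=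
    Set.union_subset (Set.subset_union_right.trans Set.subset_union_left)
      Set.subset_union_right
  have R1 := (reach_chain2 G hA hB hu1 hv1 he1 hx hv1).map (homIncl G hs1)
  have R2 := (reach_chain2 G hB hC hu2 hv2 he2 hv1 hy).map (homIncl G hs2)
  exact R1.trans R2

lemma no_K4 {V : Type} {G : SimpleGraph V} (p : V → ℕ) (hinj : Function.Injective p)
    (hNC : ∀ u v s t : V, G.Adj u v → G.Adj s t → s ≠ u → s ≠ v → t ≠ u → t ≠ v →
      ¬ Sepp (p u) (p v) (p s) (p t)) :
    ¬ (completeGraph (Fin 4)).IsMinorOf G := by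
  rintro ⟨Br, hconn, hdisj, hedge⟩
  have hne : ∀ i, ∃ x, x ∈ Br i := by
    intro i
    obtain ⟨⟨x, hx⟩⟩ := (hconn i).nonempty
    exact ⟨x, hx⟩
  choose r hr using hne
  have hfinj : Function.Injective (fun i => p (r i)) := by
    intro i j h
    by_contra hij
    exact Set.disjoint_left.mp (hdisj i j hij) (hr i) ((hinj h) ▸ hr j)
  set σ := Tuple.sort (fun i => p (r i)) with hσ
  have hmono : StrictMono ((fun i => p (r i)) ∘ σ) :=
    (Tuple.monotone_sort _).strictMono_of_injective (hfinj.comp σ.injective)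
  have hE : ∀ i j : Fin 4, i ≠ j → ∃ u ∈ Br i, ∃ v ∈ Br j, G.Adj u v := by
    intro i j hij
    exact hedge i j hij
  obtain ⟨u1, hu1, v1, hv1, he1⟩ := hE (σ 0) (σ 2) (σ.injective.ne (by decide))
  obtain ⟨u2, hu2, v2, hv2, he2⟩ := hE (σ 1) (σ 3) (σ.injective.ne (by decide))
  obtain ⟨W1⟩ := reach_chain2 G (hconn (σ 0)) (hconn (σ 2)) hu1 hv1 he1 (hr (σ 0)) (hr (σ 2))
  obtain ⟨W2⟩ := reach_chain2 G (hconn (σ 1)) (hconn (σ 3)) hu2 hv2 he2 (hr (σ 1)) (hr (σ 3))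
  have hd : ∀ x, x ∈ Br (σ 0) ∪ Br (σ 2) → x ∉ Br (σ 1) ∪ Br (σ 3) := by
    rintro x (h | h) (h' | h')
    · exact Set.disjoint_left.mp (hdisj _ _ (σ.injective.ne (by decide))) h h'
    · exact Set.disjoint_left.mp (hdisj _ _ (σ.injective.ne (by decide))) h h'
    · exact Set.disjoint_left.mp (hdisj _ _ (σ.injective.ne (by decide))) h h'
    · exact Set.disjoint_left.mp (hdisj _ _ (σ.injective.ne (by decide))) h h'
  have h01 : p (r (σ 0)) < p (r (σ 1)) := by simpa [Function.comp] using hmono (by decide : (0 : Fin 4) < 1)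
  have h12 : p (r (σ 1)) < p (r (σ 2)) := by simpa [Function.comp] using hmono (by decide : (1 : Fin 4) < 2)
  have h23 : p (r (σ 2)) < p (r (σ 3)) := by simpa [Function.comp] using hmono (by decide : (2 : Fin 4) < 3)
  have hsep : Sepp (p (r (σ 1))) (p (r (σ 3))) (p (r (σ 0))) (p (r (σ 2))) := by
    unfold Sepp Ins
    omega
  exact no_cross_paths p hinj hNC hd W1 W2 hsep

lemma no_K23 {V : Type} {G : SimpleGraph V} (p : V → ℕ) (hinj : Function.Injective p)
    (hNC : ∀ u v s t : V, G.Adj u v → G.Adj s t → s ≠ u → s ≠ v → t ≠ u → t ≠ v →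
      ¬ Sepp (p u) (p v) (p s) (p t)) :
    ¬ (completeBipartiteGraph (Fin 2) (Fin 3)).IsMinorOf G := by
  rintro ⟨Br, hconn, hdisj, hedge⟩
  have hne : ∀ i, ∃ x, x ∈ Br i := by
    intro i
    obtain ⟨⟨x, hx⟩⟩ := (hconn i).nonempty
    exact ⟨x, hx⟩
  choose r hr using hne
  have hE : ∀ (i : Fin 2) (j : Fin 3), ∃ u ∈ Br (.inl i), ∃ v ∈ Br (.inr j), G.Adj u v := by
    intro i j
    exact hedge _ _ (by simp)
  have hrinj : ∀ i j : Fin 2 ⊕ Fin 3, i ≠ j → p (r i) ≠ p (r j) := fun i j hij h =>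
    Set.disjoint_left.mp (hdisj i j hij) (hr i) ((hinj h) ▸ hr j)
  have hfinj : Function.Injective (fun j : Fin 3 => p (r (.inr j))) := by
    intro i j h
    by_contra hij
    exact hrinj _ _ (fun hh => hij (Sum.inr_injective hh)) h
  set σ := Tuple.sort (fun j : Fin 3 => p (r (.inr j))) with hσ
  have hmono : StrictMono ((fun j : Fin 3 => p (r (.inr j))) ∘ σ) :=
    (Tuple.monotone_sort _).strictMono_of_injective (hfinj.comp σ.injective)
  have h01 : p (r (.inr (σ 0))) < p (r (.inr (σ 1))) := by
    simpa [Function.comp] using hmono (by decide : (0 : Fin 3) < 1)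
  have h12 : p (r (.inr (σ 1))) < p (r (.inr (σ 2))) := by
    simpa [Function.comp] using hmono (by decide : (1 : Fin 3) < 2)
  have hqa0 : p (r (.inl 1)) ≠ p (r (.inr (σ 0))) := hrinj _ _ (by simp)
  have hqa1 : p (r (.inl 1)) ≠ p (r (.inr (σ 1))) := hrinj _ _ (by simp)
  have hqa2 : p (r (.inl 1)) ≠ p (r (.inr (σ 2))) := hrinj _ _ (by simp)
  have hne01 : (σ 0) ≠ (σ 1) := σ.injective.ne (by decide)
  have hne02 : (σ 0) ≠ (σ 2) := σ.injective.ne (by decide)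
  have hne12 : (σ 1) ≠ (σ 2) := σ.injective.ne (by decide)
  obtain ⟨ua0, hua0, va0, hva0, hea0⟩ := hE 0 (σ 0)
  obtain ⟨ua1, hua1, va1, hva1, hea1⟩ := hE 0 (σ 1)
  obtain ⟨ua2, hua2, va2, hva2, hea2⟩ := hE 0 (σ 2)
  obtain ⟨ub0, hub0, vb0, hvb0, heb0⟩ := hE 1 (σ 0)
  obtain ⟨ub1, hub1, vb1, hvb1, heb1⟩ := hE 1 (σ 1)
  obtain ⟨ub2, hub2, vb2, hvb2, heb2⟩ := hE 1 (σ 2)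
  have kill1 : ¬ (p (r (.inl 1)) < p (r (.inr (σ 0))) ∨
      p (r (.inr (σ 2))) < p (r (.inl 1))) := by
    intro hout
    obtain ⟨W1⟩ := reach_chain3 G (hconn (.inr (σ 0))) (hconn (.inl 0)) (hconn (.inr (σ 2)))
      hva0 hua0 hea0.symm hua2 hva2 hea2 (hr (.inr (σ 0))) (hr (.inr (σ 2)))
    obtain ⟨W2⟩ := reach_chain2 G (hconn (.inr (σ 1))) (hconn (.inl 1))
      hvb1 hub1 heb1.symm (hr (.inr (σ 1))) (hr (.inl 1))
    have hd : ∀ x, x ∈ Br (.inr (σ 0)) ∪ Br (.inl 0) ∪ Br (.inr (σ 2)) →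
        x ∉ Br (.inr (σ 1)) ∪ Br (.inl 1) := by
      rintro x ((h | h) | h) (h' | h')
      · exact Set.disjoint_left.mp (hdisj _ _ (fun hh => hne01 (Sum.inr_injective hh))) h h'
      · exact Set.disjoint_left.mp (hdisj _ _ (by simp)) h h'
      · exact Set.disjoint_left.mp (hdisj _ _ (by simp)) h h'
      · exact Set.disjoint_left.mp (hdisj _ _ (by decide)) h h'
      · exact Set.disjoint_left.mp (hdisj _ _
          (fun hh => hne12 (Sum.inr_injective hh).symm)) h h'
      · exact Set.disjoint_left.mp (hdisj _ _ (by simp)) h h'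
    have hsep : Sepp (p (r (.inr (σ 1)))) (p (r (.inl 1)))
        (p (r (.inr (σ 0)))) (p (r (.inr (σ 2)))) := by
      unfold Sepp Ins
      omega
    exact no_cross_paths p hinj hNC hd W1 W2 hsep
  have kill2 : ¬ (p (r (.inr (σ 0))) < p (r (.inl 1)) ∧
      p (r (.inl 1)) < p (r (.inr (σ 1)))) := by
    intro hin
    obtain ⟨W1⟩ := reach_chain3 G (hconn (.inr (σ 0))) (hconn (.inl 0)) (hconn (.inr (σ 1)))
      hva0 hua0 hea0.symm hua1 hva1 hea1 (hr (.inr (σ 0))) (hr (.inr (σ 1)))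
    obtain ⟨W2⟩ := reach_chain2 G (hconn (.inl 1)) (hconn (.inr (σ 2)))
      hub2 hvb2 heb2 (hr (.inl 1)) (hr (.inr (σ 2)))
    have hd : ∀ x, x ∈ Br (.inr (σ 0)) ∪ Br (.inl 0) ∪ Br (.inr (σ 1)) →
        x ∉ Br (.inl 1) ∪ Br (.inr (σ 2)) := by
      rintro x ((h | h) | h) (h' | h')
      · exact Set.disjoint_left.mp (hdisj _ _ (by simp)) h h'
      · exact Set.disjoint_left.mp (hdisj _ _
          (fun hh => hne02 (Sum.inr_injective hh))) h h'
      · exact Set.disjoint_left.mp (hdisj _ _ (by decide)) h h'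
      · exact Set.disjoint_left.mp (hdisj _ _ (by simp)) h h'
      · exact Set.disjoint_left.mp (hdisj _ _ (by simp)) h h'
      · exact Set.disjoint_left.mp (hdisj _ _
          (fun hh => hne12 (Sum.inr_injective hh))) h h'
    have hsep : Sepp (p (r (.inl 1))) (p (r (.inr (σ 2))))
        (p (r (.inr (σ 0)))) (p (r (.inr (σ 1)))) := by
      unfold Sepp Ins
      omega
    exact no_cross_paths p hinj hNC hd W1 W2 hsep
  have kill3 : ¬ (p (r (.inr (σ 1))) < p (r (.inl 1)) ∧
      p (r (.inl 1)) < p (r (.inr (σ 2)))) := by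
    intro hin
    obtain ⟨W1⟩ := reach_chain3 G (hconn (.inr (σ 1))) (hconn (.inl 0)) (hconn (.inr (σ 2)))
      hva1 hua1 hea1.symm hua2 hva2 hea2 (hr (.inr (σ 1))) (hr (.inr (σ 2)))
    obtain ⟨W2⟩ := reach_chain2 G (hconn (.inl 1)) (hconn (.inr (σ 0)))
      hub0 hvb0 heb0 (hr (.inl 1)) (hr (.inr (σ 0)))
    have hd : ∀ x, x ∈ Br (.inr (σ 1)) ∪ Br (.inl 0) ∪ Br (.inr (σ 2)) →
        x ∉ Br (.inl 1) ∪ Br (.inr (σ 0)) := by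
      rintro x ((h | h) | h) (h' | h')
      · exact Set.disjoint_left.mp (hdisj _ _ (by simp)) h h'
      · exact Set.disjoint_left.mp (hdisj _ _
          (fun hh => hne01 (Sum.inr_injective hh).symm)) h h'
      · exact Set.disjoint_left.mp (hdisj _ _ (by decide)) h h'
      · exact Set.disjoint_left.mp (hdisj _ _ (by simp)) h h'
      · exact Set.disjoint_left.mp (hdisj _ _ (by simp)) h h'
      · exact Set.disjoint_left.mp (hdisj _ _
          (fun hh => hne02 (Sum.inr_injective hh).symm)) h h'
    have hsep : Sepp (p (r (.inl 1))) (p (r (.inr (σ 0))))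
        (p (r (.inr (σ 1)))) (p (r (.inr (σ 2)))) := by
      unfold Sepp Ins
      omega
    exact no_cross_paths p hinj hNC hd W1 W2 hsep
  push_neg at kill1
  omega

def edgeList : List (ZMod 24 × ZMod 24) := [(0, 1), (1, 2), (2, 3), (3, 4), (4, 5), (5, 6), (6, 7), (7, 8), (8, 9), (9, 10), (10, 11), (11, 12), (12, 13), (13, 14), (14, 15), (15, 16), (16, 17), (17, 18), (18, 19), (19, 20), (20, 21), (21, 22), (22, 23), (23, 0), (0, 2), (2, 4), (4, 6), (0, 4), (0, 6), (0, 7), (8, 10), (10, 12), (12, 14), (8, 12), (8, 14), (8, 15), (16, 18), (18, 20), (20, 22), (16, 20), (16, 22), (16, 23)]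

def G24 : SimpleGraph (ZMod 24) where
  Adj u v := u ≠ v ∧ ((u, v) ∈ edgeList ∨ (v, u) ∈ edgeList)
  symm := ⟨fun u v h => ⟨h.1.symm, h.2.symm⟩⟩
  loopless := ⟨fun v h => h.1 rfl⟩

instance : DecidableRel G24.Adj := fun u v =>
  inferInstanceAs (Decidable (u ≠ v ∧ ((u, v) ∈ edgeList ∨ (v, u) ∈ edgeList)))

lemma hcyc : ∀ u : ZMod 24, G24.Adj u (u + 1) := by decide

lemma hub_ne (v : ZMod 24) : v + 1 ≠ v := by
  intro hh
  have h1 : (1 : ZMod 24) = 0 := by linear_combination hh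
  exact absurd h1 (by decide)

lemma reach_aux (v : ZMod 24) :
    ∀ k : ℕ, k ≤ 22 → ∀ h : v + 1 + (k : ZMod 24) ≠ v,
      (G24.induce {u | u ≠ v}).Reachable ⟨v + 1 + (k : ZMod 24), h⟩ ⟨v + 1, hub_ne v⟩ := by
  intro k
  induction k with
  | zero =>
    intro _ h
    have he : (⟨v + 1 + ((0 : ℕ) : ZMod 24), h⟩ : ↥{u | u ≠ v}) = ⟨v + 1, hub_ne v⟩ :=
      Subtype.ext (by push_cast; ring)
    rw [he]
  | succ k ih =>
    intro hk h
    have hmem : v + 1 + (k : ZMod 24) ≠ v := by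
      intro hh
      have h0 : ((k + 1 : ℕ) : ZMod 24) = 0 := by push_cast; linear_combination hh
      have h2 := ZMod.val_cast_of_lt (show k + 1 < 24 by omega)
      rw [h0] at h2
      simp at h2
    have heq : v + 1 + ((k + 1 : ℕ) : ZMod 24) = (v + 1 + (k : ZMod 24)) + 1 := by
      push_cast; ring
    have hadj : G24.Adj (v + 1 + ((k + 1 : ℕ) : ZMod 24)) (v + 1 + (k : ZMod 24)) := by
      rw [heq]; exact (hcyc _).symm
    have step : (G24.induce {u | u ≠ v}).Adj ⟨v + 1 + ((k + 1 : ℕ) : ZMod 24), h⟩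
        ⟨v + 1 + (k : ZMod 24), hmem⟩ := hadj
    exact step.reachable.trans (ih (by omega) hmem)

lemma G24_del_conn (v : ZMod 24) : (G24.induce {u | u ≠ v}).Connected := by
  rw [connected_iff]
  refine ⟨?_, ⟨⟨v + 1, hub_ne v⟩⟩⟩
  have key : ∀ a : ↥{u | u ≠ v}, (G24.induce {u | u ≠ v}).Reachable a ⟨v + 1, hub_ne v⟩ := by
    intro a
    have hane : a.1 ≠ v := a.2
    set k := (a.1 - (v + 1)).val with hk
    have hrepr : a.1 = v + 1 + (k : ZMod 24) := by
      rw [hk, ZMod.natCast_val, ZMod.cast_id]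
      ring
    have hk24 : k < 24 := ZMod.val_lt _
    have hkne : k ≠ 23 := by
      intro h23
      apply hane
      have h24 : (1 : ZMod 24) + ((23 : ℕ) : ZMod 24) = 0 := by decide
      rw [hrepr, h23]
      linear_combination h24
    have hr := reach_aux v k (by omega) (hrepr ▸ a.2)
    have ea : a = ⟨v + 1 + (k : ZMod 24), hrepr ▸ a.2⟩ := Subtype.ext hrepr
    rw [ea]
    exact hr
  exact fun a b => (key a).trans (key b).symm

lemma reach_of_chain {V : Type} {G : SimpleGraph V} (S : Set V) :
    ∀ (a : V) (ha : a ∈ S) (l : List V), List.Chain G.Adj a l → (∀ x ∈ l, x ∈ S) →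
      ∀ x (_ : x ∈ l) (hxS : x ∈ S), (G.induce S).Reachable ⟨x, hxS⟩ ⟨a, ha⟩ := by
  intro a ha l
  induction l generalizing a with
  | nil => intro _ _ x hx _; simp at hx
  | cons b t ih =>
    intro hch hsub x hx hxS
    obtain ⟨hab, hbt⟩ := List.chain_cons.mp hch
    have hbS : b ∈ S := hsub b List.mem_cons_self
    have edge : (G.induce S).Adj ⟨b, hbS⟩ ⟨a, ha⟩ := hab.symm
    rcases List.mem_cons.mp hx with rfl | hx'
    · exact edge.reachable
    · exact (ih b hbS hbt (fun y hy => hsub y (List.mem_cons_of_mem _ hy)) x hx' hxS).trans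
        edge.reachable

lemma induce_connected_of_chain {V : Type} {G : SimpleGraph V} (S : Set V)
    (a : V) (ha : a ∈ S) (t : List V) (hchain : List.Chain G.Adj a t)
    (hsub : ∀ x ∈ t, x ∈ S) (hcov : ∀ x ∈ S, x ∈ a :: t) :
    (G.induce S).Connected := by
  rw [connected_iff]
  refine ⟨?_, ⟨⟨a, ha⟩⟩⟩
  have key : ∀ u : ↥S, (G.induce S).Reachable u ⟨a, ha⟩ := by
    rintro ⟨x, hxS⟩
    rcases List.mem_cons.mp (hcov x hxS) with rfl | hx'
    · rfl
    · exact reach_of_chain S a ha t hchain hsub x hx' hxS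
  exact fun u w => (key u).trans (key w).symm

def S1 : Finset (ZMod 24) := {0, 1, 2, 3, 4, 5, 6, 7}
def S2 : Finset (ZMod 24) := {8, 9, 10, 11, 12, 13, 14, 15}
def S3 : Finset (ZMod 24) := {16, 17, 18, 19, 20, 21, 22, 23}

lemma connC1 : (G24.induce (↑(S2 ∪ S3) : Set (ZMod 24))).Connected := by
  have hch : List.Chain G24.Adj 8 [9, 10, 11, 12, 13, 14, 15, 16, 17, 18, 19, 20, 21, 22, 23] := by
    repeat (first | exact List.Chain.nil | refine List.Chain.cons (by decide) ?_)
  have hsub : ∀ x ∈ ([9, 10, 11, 12, 13, 14, 15, 16, 17, 18, 19, 20, 21, 22, 23] : List (ZMod 24)), x ∈ S2 ∪ S3 := by decide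
  have hcov : ∀ x : ZMod 24, x ∈ S2 ∪ S3 → x ∈ ([8, 9, 10, 11, 12, 13, 14, 15, 16, 17, 18, 19, 20, 21, 22, 23] : List (ZMod 24)) := by decide
  exact induce_connected_of_chain _ 8 (Finset.mem_coe.mpr (by decide)) _ hch
    (fun x hx => Finset.mem_coe.mpr (hsub x hx)) (fun x hx => hcov x (Finset.mem_coe.mp hx))

lemma connC2 : (G24.induce (↑(S1 ∪ S3) : Set (ZMod 24))).Connected := by
  have hch : List.Chain G24.Adj 16 [17, 18, 19, 20, 21, 22, 23, 0, 1, 2, 3, 4, 5, 6, 7] := by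
    repeat (first | exact List.Chain.nil | refine List.Chain.cons (by decide) ?_)
  have hsub : ∀ x ∈ ([17, 18, 19, 20, 21, 22, 23, 0, 1, 2, 3, 4, 5, 6, 7] : List (ZMod 24)), x ∈ S1 ∪ S3 := by decide
  have hcov : ∀ x : ZMod 24, x ∈ S1 ∪ S3 → x ∈ ([16, 17, 18, 19, 20, 21, 22, 23, 0, 1, 2, 3, 4, 5, 6, 7] : List (ZMod 24)) := by decide
  exact induce_connected_of_chain _ 16 (Finset.mem_coe.mpr (by decide)) _ hch
    (fun x hx => Finset.mem_coe.mpr (hsub x hx)) (fun x hx => hcov x (Finset.mem_coe.mp hx))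

lemma connC3 : (G24.induce (↑(S1 ∪ S2) : Set (ZMod 24))).Connected := by
  have hch : List.Chain G24.Adj 0 [1, 2, 3, 4, 5, 6, 7, 8, 9, 10, 11, 12, 13, 14, 15] := by
    repeat (first | exact List.Chain.nil | refine List.Chain.cons (by decide) ?_)
  have hsub : ∀ x ∈ ([1, 2, 3, 4, 5, 6, 7, 8, 9, 10, 11, 12, 13, 14, 15] : List (ZMod 24)), x ∈ S1 ∪ S2 := by decide
  have hcov : ∀ x : ZMod 24, x ∈ S1 ∪ S2 → x ∈ ([0, 1, 2, 3, 4, 5, 6, 7, 8, 9, 10, 11, 12, 13, 14, 15] : List (ZMod 24)) := by decide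
  exact induce_connected_of_chain _ 0 (Finset.mem_coe.mpr (by decide)) _ hch
    (fun x hx => Finset.mem_coe.mpr (hsub x hx)) (fun x hx => hcov x (Finset.mem_coe.mp hx))

lemma block1 : NoThin (G24.induce (↑S1 : Set (ZMod 24))) 3 := by
  refine block_nothin (H := G24.induce (↑S1 : Set (ZMod 24)))
    ![⟨0, Finset.mem_coe.mpr (by decide)⟩, ⟨1, Finset.mem_coe.mpr (by decide)⟩, ⟨2, Finset.mem_coe.mpr (by decide)⟩, ⟨3, Finset.mem_coe.mpr (by decide)⟩, ⟨4, Finset.mem_coe.mpr (by decide)⟩, ⟨5, Finset.mem_coe.mpr (by decide)⟩, ⟨6, Finset.mem_coe.mpr (by decide)⟩, ⟨7, Finset.mem_coe.mpr (by decide)⟩] ?_ ?_ ?_ ?_ ?_ ?_ ?_ ?_ ?_ ?_ ?_ ?_ ?_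
  · decide
  · exact (by decide : G24.Adj 0 1)
  · exact (by decide : G24.Adj 1 2)
  · exact (by decide : G24.Adj 0 2)
  · exact (by decide : G24.Adj 2 3)
  · exact (by decide : G24.Adj 3 4)
  · exact (by decide : G24.Adj 2 4)
  · exact (by decide : G24.Adj 4 5)
  · exact (by decide : G24.Adj 5 6)
  · exact (by decide : G24.Adj 4 6)
  · exact (by decide : G24.Adj 6 7)
  · exact (by decide : G24.Adj 7 0)
  · exact (by decide : G24.Adj 6 0)

lemma block2 : NoThin (G24.induce (↑S2 : Set (ZMod 24))) 3 := by
  refine block_nothin (H := G24.induce (↑S2 : Set (ZMod 24)))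
    ![⟨8, Finset.mem_coe.mpr (by decide)⟩, ⟨9, Finset.mem_coe.mpr (by decide)⟩, ⟨10, Finset.mem_coe.mpr (by decide)⟩, ⟨11, Finset.mem_coe.mpr (by decide)⟩, ⟨12, Finset.mem_coe.mpr (by decide)⟩, ⟨13, Finset.mem_coe.mpr (by decide)⟩, ⟨14, Finset.mem_coe.mpr (by decide)⟩, ⟨15, Finset.mem_coe.mpr (by decide)⟩] ?_ ?_ ?_ ?_ ?_ ?_ ?_ ?_ ?_ ?_ ?_ ?_ ?_
  · decide
  · exact (by decide : G24.Adj 8 9)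
  · exact (by decide : G24.Adj 9 10)
  · exact (by decide : G24.Adj 8 10)
  · exact (by decide : G24.Adj 10 11)
  · exact (by decide : G24.Adj 11 12)
  · exact (by decide : G24.Adj 10 12)
  · exact (by decide : G24.Adj 12 13)
  · exact (by decide : G24.Adj 13 14)
  · exact (by decide : G24.Adj 12 14)
  · exact (by decide : G24.Adj 14 15)
  · exact (by decide : G24.Adj 15 8)
  · exact (by decide : G24.Adj 14 8)

lemma block3 : NoThin (G24.induce (↑S3 : Set (ZMod 24))) 3 := by
  refine block_nothin (H := G24.induce (↑S3 : Set (ZMod 24)))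
    ![⟨16, Finset.mem_coe.mpr (by decide)⟩, ⟨17, Finset.mem_coe.mpr (by decide)⟩, ⟨18, Finset.mem_coe.mpr (by decide)⟩, ⟨19, Finset.mem_coe.mpr (by decide)⟩, ⟨20, Finset.mem_coe.mpr (by decide)⟩, ⟨21, Finset.mem_coe.mpr (by decide)⟩, ⟨22, Finset.mem_coe.mpr (by decide)⟩, ⟨23, Finset.mem_coe.mpr (by decide)⟩] ?_ ?_ ?_ ?_ ?_ ?_ ?_ ?_ ?_ ?_ ?_ ?_ ?_
  · decide
  · exact (by decide : G24.Adj 16 17)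
  · exact (by decide : G24.Adj 17 18)
  · exact (by decide : G24.Adj 16 18)
  · exact (by decide : G24.Adj 18 19)
  · exact (by decide : G24.Adj 19 20)
  · exact (by decide : G24.Adj 18 20)
  · exact (by decide : G24.Adj 20 21)
  · exact (by decide : G24.Adj 21 22)
  · exact (by decide : G24.Adj 20 22)
  · exact (by decide : G24.Adj 22 23)
  · exact (by decide : G24.Adj 23 16)
  · exact (by decide : G24.Adj 22 16)

lemma G24_nothin4 : NoThin G24 4 := by
  have hsub23 : ∀ x ∈ S2 ∪ S3, x ∉ S1 := by decide
  have hsub13 : ∀ x ∈ S1 ∪ S3, x ∉ S2 := by decide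
  have hsub12 : ∀ x ∈ S1 ∪ S2, x ∉ S3 := by decide
  exact nothin_of_three G24 3 S1 S2 S3 block1 block2 block3
    (↑(S2 ∪ S3)) (↑(S1 ∪ S3)) (↑(S1 ∪ S2)) connC1 connC2 connC3
    (fun x hx => hsub23 x (Finset.mem_coe.mp hx))
    (fun x hx => hsub13 x (Finset.mem_coe.mp hx))
    (fun x hx => hsub12 x (Finset.mem_coe.mp hx))
    (Finset.coe_subset.mpr (by decide)) (Finset.coe_subset.mpr (by decide))
    (Finset.coe_subset.mpr (by decide)) (Finset.coe_subset.mpr (by decide))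
    (Finset.coe_subset.mpr (by decide)) (Finset.coe_subset.mpr (by decide))

set_option maxRecDepth 40000 in
lemma hpair : ∀ e ∈ edgeList, ∀ f ∈ edgeList, e.1 ≠ f.1 → e.1 ≠ f.2 → e.2 ≠ f.1 → e.2 ≠ f.2 →
    ¬ Sepp e.1.val e.2.val f.1.val f.2.val := by decide

lemma sepp_comm1 : ∀ a b x y : ℕ, x ≠ a → x ≠ b → y ≠ a → y ≠ b →
    (Sepp a b x y ↔ Sepp b a x y) := by
  intro a b x y h1 h2 h3 h4
  unfold Sepp Ins
  omega

lemma sepp_comm2 : ∀ a b x y : ℕ, (Sepp a b x y ↔ Sepp a b y x) := by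
  intro a b x y
  unfold Sepp
  tauto

lemma G24_NC : ∀ u v s t : ZMod 24, G24.Adj u v → G24.Adj s t →
    s ≠ u → s ≠ v → t ≠ u → t ≠ v → ¬ Sepp u.val v.val s.val t.val := by
  intro u v s t huv hst h1 h2 h3 h4
  have hval : ∀ a b : ZMod 24, a ≠ b → a.val ≠ b.val :=
    fun a b hab h => hab (ZMod.val_injective 24 h)
  obtain ⟨hne1, he1⟩ := huv
  obtain ⟨hne2, he2⟩ := hst
  have d1 := hval _ _ h1
  have d2 := hval _ _ h2
  have d3 := hval _ _ h3
  have d4 := hval _ _ h4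
  rcases he1 with h | h <;> rcases he2 with h' | h'
  · exact hpair _ h _ h' h1.symm h3.symm h2.symm h4.symm
  · intro hS
    exact hpair _ h _ h' h3.symm h1.symm h4.symm h2.symm ((sepp_comm2 _ _ _ _).mp hS)
  · intro hS
    exact hpair _ h _ h' h2.symm h4.symm h1.symm h3.symm
      ((sepp_comm1 u.val v.val s.val t.val d1 d2 d3 d4).mp hS)
  · intro hS
    exact hpair _ h _ h' h4.symm h2.symm h3.symm h1.symm
      ((sepp_comm2 _ _ _ _).mp ((sepp_comm1 u.val v.val s.val t.val d1 d2 d3 d4).mp hS))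

lemma G24_outer : Outerplanar G24 :=
  ⟨no_K4 ZMod.val (ZMod.val_injective 24) G24_NC,
   no_K23 ZMod.val (ZMod.val_injective 24) G24_NC⟩


/-- There is a 2-connected outerplanar graph with at most 24 vertices whose pathwidth is
at least 4; consequently `M₃ ≤ 23`. -/
theorem M3_le_twentythree :
    (∃ (V : Type) (_ : Fintype V) (G : SimpleGraph V),
      Fintype.card V ≤ 24 ∧ TwoConnected G ∧ Outerplanar G ∧ 4 ≤ pathwidth G) ∧
    Mconst 3 ≤ 23 := by
  have hcard : Fintype.card (ZMod 24) ≤ 24 := by rw [ZMod.card]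
  have h2c : TwoConnected G24 := ⟨by rw [Nat.card_zmod]; omega, G24_del_conn⟩
  have hpw : 4 ≤ pathwidth G24 := le_pathwidth_of_noThin G24 G24_nothin4
  refine ⟨⟨ZMod 24, inferInstance, G24, hcard, h2c, G24_outer, hpw⟩, ?_⟩
  refine csSup_le' ?_
  intro t ht
  by_contra hlt
  push_neg at hlt
  have := ht (ZMod 24) inferInstance G24 (le_trans hcard (by omega)) G24_outer
  omega
end

section
/- Every tree with pathwidth at least 3 has at least 22 vertices. -/
open SimpleGraph

set_option linter.unusedSectionVars false
set_option linter.unusedVariables false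

section Dev
variable {V : Type} [DecidableEq V] {T : SimpleGraph V}

/-- connectivity within a finset of vertices -/
def Conn (T : SimpleGraph V) (S : Finset V) (u v : V) : Prop :=
  ∃ w : T.Walk u v, ∀ x ∈ w.support, x ∈ S

open scoped Classical in
noncomputable def comp (T : SimpleGraph V) (S : Finset V) (v : V) : Finset V :=
  S.filter (Conn T S v)

namespace Conn

theorem refl {S : Finset V} {v : V} (h : v ∈ S) : Conn T S v v :=
  ⟨Walk.nil, by simp [h]⟩

theorem mem_left {S : Finset V} {u v : V} (h : Conn T S u v) : u ∈ S := by
  obtain ⟨w, hw⟩ := h; exact hw _ w.start_mem_support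

theorem mem_right {S : Finset V} {u v : V} (h : Conn T S u v) : v ∈ S := by
  obtain ⟨w, hw⟩ := h; exact hw _ w.end_mem_support

theorem symm {S : Finset V} {u v : V} (h : Conn T S u v) : Conn T S v u := by
  obtain ⟨w, hw⟩ := h; exact ⟨w.reverse, by simpa using hw⟩

theorem trans {S : Finset V} {u v x : V} (h : Conn T S u v) (h' : Conn T S v x) :
    Conn T S u x := by
  obtain ⟨w, hw⟩ := h; obtain ⟨w', hw'⟩ := h'
  refine ⟨w.append w', ?_⟩
  intro y hy
  rcases (Walk.mem_support_append_iff _ _).1 hy with h | h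
  · exact hw _ h
  · exact hw' _ h

theorem mono {S S' : Finset V} (hS : S ⊆ S') {u v : V} (h : Conn T S u v) :
    Conn T S' u v := by
  obtain ⟨w, hw⟩ := h; exact ⟨w, fun x hx => hS (hw x hx)⟩

theorem adj {S : Finset V} {u v : V} (hu : u ∈ S) (hv : v ∈ S) (h : T.Adj u v) :
    Conn T S u v :=
  ⟨Walk.cons h Walk.nil, by simp [hu, hv]⟩

end Conn

theorem mem_comp {S : Finset V} {u v : V} : u ∈ comp T S v ↔ Conn T S v u := by
  classical
  constructor
  · intro h; exact (Finset.mem_filter.1 (by simpa [comp] using h)).2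
  · intro h; exact Finset.mem_filter.2 ⟨h.mem_right, h⟩

theorem comp_subset {S : Finset V} {v : V} : comp T S v ⊆ S := by
  classical
  intro x hx; exact (Finset.mem_filter.1 (by simpa [comp] using hx)).1

theorem mem_comp_self {S : Finset V} {v : V} (h : v ∈ S) : v ∈ comp T S v :=
  mem_comp.2 (Conn.refl h)

theorem comp_eq_of_conn {S : Finset V} {u v : V} (h : Conn T S u v) :
    comp T S u = comp T S v := by
  ext x
  simp only [mem_comp]
  exact ⟨fun h' => h.symm.trans h', fun h' => h.trans h'⟩

theorem comp_eq_of_mem {S : Finset V} {u v : V} (h : u ∈ comp T S v) :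
    comp T S u = comp T S v :=
  comp_eq_of_conn (mem_comp.1 h).symm

/-- components are disjoint -/
theorem comp_eq_of_mem_both {S : Finset V} {u v w : V} (h : u ∈ comp T S v)
    (h' : u ∈ comp T S w) : comp T S v = comp T S w := by
  rw [← comp_eq_of_mem h, ← comp_eq_of_mem h']

theorem comp_closed_adj {S : Finset V} {v u x : V} (h : u ∈ comp T S v)
    (hx : x ∈ S) (hadj : T.Adj u x) : x ∈ comp T S v :=
  mem_comp.2 ((mem_comp.1 h).trans (Conn.adj (mem_comp.1 h).mem_right hx hadj))

/-- a walk within `S` starting at `v` stays in `comp T S v` -/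
theorem support_subset_comp {S : Finset V} {v u : V} (w : T.Walk v u)
    (hw : ∀ x ∈ w.support, x ∈ S) : ∀ x ∈ w.support, x ∈ comp T S v := by
  induction w with
  | nil => intro x hx; simp at hx; subst hx; exact mem_comp_self (hw _ (by simp))
  | @cons a b c h p ih =>
    intro x hx
    have ha : a ∈ S := hw a (by simp)
    have hb : ∀ y ∈ p.support, y ∈ S := fun y hy => hw y (by simp [hy])
    rcases (by simpa using hx : x = a ∨ x ∈ p.support) with rfl | hx'
    · exact mem_comp_self ha
    · have hxb := ih hb x hx'
      have hconn : Conn T S a b := Conn.adj ha (hb b (by simp)) h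
      rw [comp_eq_of_conn hconn]; exact hxb

theorem conn_in_comp {S : Finset V} {v u : V} (h : u ∈ comp T S v) :
    Conn T (comp T S v) v u := by
  obtain ⟨w, hw⟩ := mem_comp.1 h
  exact ⟨w, support_subset_comp w hw⟩

/-- the component is itself connected as a set -/
theorem connSet_comp {S : Finset V} {v : V} :
    ∀ u ∈ comp T S v, ∀ w ∈ comp T S v, Conn T (comp T S v) u w := by
  intro u hu w hw
  exact (conn_in_comp hu).symm.trans (conn_in_comp hw)

theorem comp_mono_of_mem {A B : Finset V} (hAB : A ⊆ B) {v : V} :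
    comp T A v ⊆ comp T B v := fun x hx => mem_comp.2 ((mem_comp.1 hx).mono hAB)

theorem isPath_concat {u v w : V} {p : T.Walk u v} (hp : p.IsPath) (h : T.Adj v w)
    (hw : w ∉ p.support) : (p.concat h).IsPath := by
  rw [Walk.isPath_def, Walk.support_concat]
  exact List.nodup_append.2 ⟨hp.support_nodup, List.nodup_singleton w, fun a ha b hb hab => hw (by simp at hb; rw [← hb, ← hab]; exact ha)⟩

theorem paths_eq (hT : T.IsAcyclic) {u v : V} {p q : T.Walk u v}
    (hp : p.IsPath) (hq : q.IsPath) : p = q := by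
  have := (isAcyclic_iff_path_unique).1 hT (p := ⟨p, hp⟩) (q := ⟨q, hq⟩)
  exact congrArg Subtype.val this

/-- if `x` is connected to `v` avoiding `u` and to `u` avoiding `v`, with `u ~ v`, contradiction -/
theorem side_disjoint (hT : T.IsAcyclic) {S : Finset V} {u v x : V} (huv : T.Adj u v)
    (h1 : Conn T (S.erase u) v x) (h2 : Conn T (S.erase v) u x) : False := by
  obtain ⟨w1, hw1⟩ := h1
  obtain ⟨w2, hw2⟩ := h2
  set p := w1.reverse.bypass with hp_def
  have hp : p.IsPath := Walk.bypass_isPath _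
  have hpsup : ∀ y ∈ p.support, y ∈ S.erase u := by
    intro y hy
    exact hw1 y (by simpa using Walk.support_bypass_subset _ hy)
  set q := w2.reverse.bypass with hq_def
  have hq : q.IsPath := Walk.bypass_isPath _
  have hqsup : ∀ y ∈ q.support, y ∈ S.erase v := by
    intro y hy
    exact hw2 y (by simpa using Walk.support_bypass_subset _ hy)
  have hv_not_q : v ∉ q.support := fun h => by simpa using (hqsup v h)
  have hr : (q.concat huv).IsPath := isPath_concat hq huv hv_not_q
  have heq := paths_eq hT hp hr
  have hu_in : u ∈ (q.concat huv).support := by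
    rw [Walk.support_concat]
    exact List.mem_append.2 (Or.inl q.end_mem_support)
  rw [← heq] at hu_in
  simpa using (hpsup u hu_in)

/-- coverage: each vertex connected to `u` within `S` lies on one of the two sides of edge `uv` -/
theorem side_cover (hT : T.IsAcyclic) {S : Finset V} {u v x : V} (huv : T.Adj u v)
    (hconn : Conn T S x u) :
    Conn T (S.erase u) v x ∨ Conn T (S.erase v) u x := by
  obtain ⟨w, hw⟩ := hconn
  set p := w.bypass with hpdef
  have hp : p.IsPath := Walk.bypass_isPath _
  have hpsup : ∀ y ∈ p.support, y ∈ S := fun y hy => hw y (Walk.support_bypass_subset _ hy)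
  by_cases hvp : v ∈ p.support
  · left
    set q := p.takeUntil v hvp with hqdef
    have hqsub := Walk.support_takeUntil_subset p hvp
    have huq : u ∉ q.support := by
      intro huq
      have hne : v ≠ u := huv.ne.symm
      have hsplit := Walk.take_spec p hvp
      have hnodup := hp.support_nodup
      rw [← hsplit, Walk.support_append] at hnodup
      have hdrop : u ∈ (p.dropUntil v hvp).support := Walk.end_mem_support _
      have hdrop' : u ∈ (p.dropUntil v hvp).support.tail := by
        have hcons : (p.dropUntil v hvp).support = v :: (p.dropUntil v hvp).support.tail :=
          Walk.support_eq_cons _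
        rw [hcons] at hdrop
        rcases List.mem_cons.1 hdrop with h | h
        · exact absurd h.symm hne
        · exact h
      exact (List.disjoint_of_nodup_append hnodup) huq hdrop'
    exact ⟨q.reverse, by
      intro y hy
      rw [Walk.support_reverse] at hy
      have hy' := List.mem_reverse.1 hy
      exact Finset.mem_erase.2 ⟨fun h => huq (by rwa [h] at hy'), hpsup y (hqsub hy')⟩⟩
  · right
    exact ⟨p.reverse, by
      intro y hy
      rw [Walk.support_reverse] at hy
      have hy' := List.mem_reverse.1 hy
      exact Finset.mem_erase.2 ⟨fun h => hvp (by rwa [h] at hy'), hpsup y hy'⟩⟩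

end Dev

section Dev2
variable {V : Type} [DecidableEq V] {T : SimpleGraph V}

theorem chain_walk_from_head : ∀ {l : List V} {a b : V}, (a :: l).Chain' T.Adj → b ∈ a :: l →
    ∃ w : T.Walk a b, ∀ x ∈ w.support, x ∈ a :: l := by
  intro l
  induction l with
  | nil =>
    intro a b _ hb
    simp at hb; subst hb
    exact ⟨Walk.nil, by simp⟩
  | cons c l' ih =>
    intro a b hl hb
    have hac : T.Adj a c := (List.isChain_cons_cons.1 hl).1
    have hl' : (c :: l').Chain' T.Adj := (List.isChain_cons_cons.1 hl).2
    rcases List.mem_cons.1 hb with rfl | hb'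
    · exact ⟨Walk.nil, by simp⟩
    · obtain ⟨w, hw⟩ := ih hl' hb'
      exact ⟨Walk.cons hac w, by
        intro x hx
        rcases List.mem_cons.1 (by simpa using hx) with rfl | h
        · simp
        · simp [hw x h]⟩

theorem chain_walk {l : List V} (hl : l.Chain' T.Adj) {a b : V} (ha : a ∈ l) (hb : b ∈ l) :
    ∃ w : T.Walk a b, ∀ x ∈ w.support, x ∈ l := by
  cases l with
  | nil => simp at ha
  | cons h t =>
    obtain ⟨w1, hw1⟩ := chain_walk_from_head hl ha
    obtain ⟨w2, hw2⟩ := chain_walk_from_head hl hb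
    exact ⟨w1.reverse.append w2, by
      intro x hx
      rcases (Walk.mem_support_append_iff _ _).1 hx with h' | h'
      · exact hw1 x (by simpa using h')
      · exact hw2 x h'⟩

/-- a vertex outside a set has at most one neighbour in each component of the set -/
theorem unique_nbr (hT : T.IsAcyclic) {A : Finset V} {p c x y : V} (hp : p ∉ A)
    (hx : x ∈ comp T A c) (hy : y ∈ comp T A c) (hax : T.Adj p x) (hay : T.Adj p y) :
    x = y := by
  by_contra hne
  obtain ⟨w, hw⟩ := connSet_comp x hx y hy
  set q := w.bypass with hq_def
  have hqp : q.IsPath := Walk.bypass_isPath _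
  have hqsup : ∀ z ∈ q.support, z ∈ A := fun z hz =>
    comp_subset (hw z (Walk.support_bypass_subset _ hz))
  have hp_notq : p ∉ q.support := fun h => hp (hqsup p h)
  have hP2 : (Walk.cons hax q).IsPath := (Walk.cons_isPath_iff _ _).2 ⟨hqp, hp_notq⟩
  have hP1 : (Walk.cons hay (Walk.nil : T.Walk y y)).IsPath := by
    rw [Walk.cons_isPath_iff]
    exact ⟨Walk.IsPath.nil, by simp [hay.ne]⟩
  have heq := paths_eq hT hP1 hP2
  have hx_in : x ∈ (Walk.cons hax q).support := by simp [q.start_mem_support]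
  rw [← heq] at hx_in
  simp at hx_in
  rcases hx_in with rfl | rfl
  · exact hp (comp_subset hx)
  · exact hne rfl

theorem walk_attach {S F : Finset V} {c y : V} (hcF : c ∉ F) (w : T.Walk c y)
    (hw : ∀ x ∈ w.support, x ∈ S) :
    (∀ x ∈ w.support, x ∉ F) ∨
      ∃ p' ∈ F, p' ∈ w.support ∧ ∃ x ∈ comp T (S \ F) c, T.Adj x p' := by
  induction w with
  | nil => exact Or.inl (by simpa using hcF)
  | @cons a b d h w' ih =>
    have ha : a ∈ S := hw a (by simp)
    have hb : b ∈ w'.support := w'.start_mem_support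
    have hbS : b ∈ S := hw b (by simp [hb])
    by_cases hbF : b ∈ F
    · refine Or.inr ⟨b, hbF, by simp [hb], a, ?_, h⟩
      exact mem_comp_self (by simp [ha, hcF])
    · have hw' : ∀ x ∈ w'.support, x ∈ S := fun x hx => hw x (by simp [hx])
      rcases ih hbF hw' with hL | ⟨p', hp'F, hp's, x, hxc, hadj⟩
      · left
        intro x hx
        rcases List.mem_cons.1 (by simpa using hx) with rfl | hx'
        · exact hcF
        · exact hL x hx'
      · refine Or.inr ⟨p', hp'F, by simp [hp's], x, ?_, hadj⟩
        have : comp T (S \ F) b = comp T (S \ F) a :=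
          comp_eq_of_conn (Conn.adj (by simp [hbS, hbF]) (by simp [ha, hcF]) h.symm)
        rwa [this] at hxc

/-- two different attachments of a component to a connected set `F` is impossible -/
theorem attach_two_false (hT : T.IsAcyclic) {S F : Finset V}
    (hF : ∀ a ∈ F, ∀ b ∈ F, Conn T F a b) {c p1 p2 x1 x2 : V} (h12 : p1 ≠ p2)
    (hp1 : p1 ∈ F) (hp2 : p2 ∈ F)
    (hx1 : x1 ∈ comp T (S \ F) c) (hx2 : x2 ∈ comp T (S \ F) c)
    (ha1 : T.Adj p1 x1) (ha2 : T.Adj x2 p2) : False := by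
  obtain ⟨w, hw⟩ := connSet_comp x1 hx1 x2 hx2
  set q := w.bypass with hq_def
  have hqp : q.IsPath := Walk.bypass_isPath _
  have hqsup : ∀ z ∈ q.support, z ∈ S \ F := fun z hz =>
    comp_subset (hw z (Walk.support_bypass_subset _ hz))
  have hp2q : p2 ∉ q.support := fun h => by simpa using (Finset.mem_sdiff.1 (hqsup p2 h)).2 hp2
  have hcat : (q.concat ha2).IsPath := isPath_concat hqp ha2 hp2q
  have hp1cat : p1 ∉ (q.concat ha2).support := by
    rw [Walk.support_concat]
    intro h
    rcases List.mem_append.1 h with h | h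
    · exact (Finset.mem_sdiff.1 (hqsup p1 h)).2 hp1
    · simp at h; exact h12 h
  have hr : (Walk.cons ha1 (q.concat ha2)).IsPath :=
    (Walk.cons_isPath_iff _ _).2 ⟨hcat, hp1cat⟩
  obtain ⟨wF, hwF⟩ := hF p1 hp1 p2 hp2
  set pF := wF.bypass with hpF_def
  have hpFp : pF.IsPath := Walk.bypass_isPath _
  have hpFsup : ∀ z ∈ pF.support, z ∈ F := fun z hz => hwF z (Walk.support_bypass_subset _ hz)
  have heq := paths_eq hT hr hpFp
  have hx1_in : x1 ∈ (Walk.cons ha1 (q.concat ha2)).support := by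
    rw [Walk.support_cons, Walk.support_concat]
    simp [q.start_mem_support]
  rw [heq] at hx1_in
  exact (Finset.mem_sdiff.1 (comp_subset hx1)).2 (hpFsup x1 hx1_in)

end Dev2

section Dev3
variable {V : Type} [DecidableEq V] {T : SimpleGraph V}

def ConnSet (T : SimpleGraph V) (S : Finset V) : Prop := ∀ a ∈ S, ∀ b ∈ S, Conn T S a b

theorem comp_disjoint {A : Finset V} {u v : V} (h : comp T A u ≠ comp T A v) :
    Disjoint (comp T A u) (comp T A v) := by
  rw [Finset.disjoint_left]
  intro x hx hx'
  exact h (comp_eq_of_mem_both hx hx')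

theorem three_heavy_false {S : Finset V} {s : ℕ} (hcard : S.card ≤ 3*s+3) {v : V}
    (hv : v ∈ S) {C1 C2 C3 : Finset V}
    (h1 : C1 ⊆ S.erase v) (h2 : C2 ⊆ S.erase v) (h3 : C3 ⊆ S.erase v)
    (hd12 : Disjoint C1 C2) (hd13 : Disjoint C1 C3) (hd23 : Disjoint C2 C3)
    (hc1 : s+1 ≤ C1.card) (hc2 : s+1 ≤ C2.card) (hc3 : s+1 ≤ C3.card) : False := by
  have hsub : C1 ∪ C2 ∪ C3 ⊆ S.erase v := by
    intro x hx
    rcases Finset.mem_union.1 hx with hx | hx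
    · rcases Finset.mem_union.1 hx with hx | hx
      · exact h1 hx
      · exact h2 hx
    · exact h3 hx
  have hcup : (C1 ∪ C2 ∪ C3).card = C1.card + C2.card + C3.card := by
    rw [Finset.card_union_of_disjoint, Finset.card_union_of_disjoint hd12]
    rw [Finset.disjoint_union_left]
    exact ⟨hd13, hd23⟩
  have h1' : (C1 ∪ C2 ∪ C3).card ≤ (S.erase v).card := Finset.card_le_card hsub
  have h2' : (S.erase v).card = S.card - 1 := Finset.card_erase_of_mem hv
  have h3' : 1 ≤ S.card := Finset.card_pos.2 ⟨v, hv⟩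
  omega

theorem connSet_toFinset_of_chain {l : List V} (hl : l.Chain' T.Adj) :
    ConnSet T l.toFinset := by
  intro a ha b hb
  obtain ⟨w, hw⟩ := chain_walk hl (List.mem_toFinset.1 ha) (List.mem_toFinset.1 hb)
  exact ⟨w, fun x hx => List.mem_toFinset.2 (hw x hx)⟩

/-- every component of `S \ F` has an attachment vertex on `F` -/
theorem comp_attach {S F : Finset V} (hS : ConnSet T S) (hFS : F ⊆ S) (hFne : F.Nonempty)
    {c : V} (hc : c ∈ S) (hcF : c ∉ F) :
    ∃ p ∈ F, p ∈ S ∧ ∃ x ∈ comp T (S \ F) c, T.Adj x p := by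
  obtain ⟨t, ht⟩ := hFne
  obtain ⟨w, hw⟩ := hS c hc t (hFS ht)
  rcases walk_attach hcF w hw with hL | ⟨p, hpF, hps, x, hx, hadj⟩
  · exact absurd ht (hL t w.end_mem_support)
  · exact ⟨p, hpF, hFS hpF, x, hx, hadj⟩

/-- if the attachment is unique, the component of `S \ F` is a full component of `S.erase p` -/
theorem comp_erase_eq {S F : Finset V} (hFS : F ⊆ S) {c p : V}
    (hc : c ∈ S) (hcF : c ∉ F) (hpF : p ∈ F)
    (huniq : ∀ p' ∈ F, (∃ x ∈ comp T (S \ F) c, T.Adj x p') → p' = p) :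
    comp T (S.erase p) c = comp T (S \ F) c := by
  have hsds : (S.erase p) \ F = S \ F := by
    ext z
    simp only [Finset.mem_sdiff, Finset.mem_erase]
    constructor
    · rintro ⟨⟨_, hz⟩, hzF⟩; exact ⟨hz, hzF⟩
    · rintro ⟨hz, hzF⟩; exact ⟨⟨fun h => hzF (h ▸ hpF), hz⟩, hzF⟩
  apply Finset.Subset.antisymm
  · intro y hy
    obtain ⟨w, hw⟩ := mem_comp.1 hy
    rcases walk_attach (S := S.erase p) hcF w hw with hL | ⟨p', hp'F, hp's, x, hx, hadj⟩
    · refine mem_comp.2 ⟨w, fun z hz => ?_⟩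
      have hzS := hw z hz
      exact Finset.mem_sdiff.2 ⟨(Finset.mem_erase.1 hzS).2, hL z hz⟩
    · rw [hsds] at hx
      have := huniq p' hp'F ⟨x, hx, hadj⟩
      subst this
      exact absurd (hw p' hp's) (by simp)
  · apply comp_mono_of_mem
    intro z hz
    have := Finset.mem_sdiff.1 hz
    exact Finset.mem_erase.2 ⟨fun h => this.2 (h ▸ hpF), this.1⟩

end Dev3

section Dev4
variable {V : Type} [DecidableEq V] {T : SimpleGraph V}

/-- a critical edge: both sides are heavy -/
def Crit (T : SimpleGraph V) [DecidableEq V] (S : Finset V) (s : ℕ) (u v : V) : Prop :=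
  T.Adj u v ∧ u ∈ S ∧ v ∈ S ∧
    s + 1 ≤ (comp T (S.erase u) v).card ∧ s + 1 ≤ (comp T (S.erase v) u).card

theorem Crit.symm {S : Finset V} {s : ℕ} {u v : V} (h : Crit T S s u v) : Crit T S s v u :=
  ⟨h.1.symm, h.2.2.1, h.2.1, h.2.2.2.2, h.2.2.2.1⟩

def CritPath (T : SimpleGraph V) [DecidableEq V] (S : Finset V) (s : ℕ) (P : List V) : Prop :=
  P.Nodup ∧ (∀ x ∈ P, x ∈ S) ∧ P.Chain' (Crit T S s) ∧ 2 ≤ P.length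

theorem CritPath.reverse {S : Finset V} {s : ℕ} {P : List V} (h : CritPath T S s P) :
    CritPath T S s P.reverse := by
  refine ⟨List.nodup_reverse.2 h.1, fun x hx => h.2.1 x (List.mem_reverse.1 hx), ?_, by simpa using h.2.2.2⟩
  show List.IsChain _ _; rw [List.isChain_reverse]
  exact h.2.2.1.imp (fun a b hab => hab.symm)

theorem CritPath.length_le {S : Finset V} {s : ℕ} {P : List V} (h : CritPath T S s P) :
    P.length ≤ S.card := by
  calc P.length = P.toFinset.card := (List.toFinset_card_of_nodup h.1).symm
  _ ≤ S.card := Finset.card_le_card (fun x hx => h.2.1 x (List.mem_toFinset.1 hx))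

open scoped Classical in
theorem exists_max_critpath {S : Finset V} {s : ℕ} (hex : ∃ P, CritPath T S s P) :
    ∃ P, CritPath T S s P ∧ ∀ Q, CritPath T S s Q → Q.length ≤ P.length := by
  classical
  set A : Finset ℕ := (Finset.range (S.card + 1)).filter
    (fun k => ∃ P, CritPath T S s P ∧ P.length = k) with hA
  have hAne : A.Nonempty := by
    obtain ⟨P, hP⟩ := hex
    exact ⟨P.length, Finset.mem_filter.2
      ⟨Finset.mem_range.2 (Nat.lt_succ_of_le hP.length_le), P, hP, rfl⟩⟩
  obtain ⟨P, hP, hPlen⟩ := (Finset.mem_filter.1 (A.max'_mem hAne)).2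
  refine ⟨P, hP, fun Q hQ => ?_⟩
  have : Q.length ∈ A := Finset.mem_filter.2
    ⟨Finset.mem_range.2 (Nat.lt_succ_of_le hQ.length_le), Q, hQ, rfl⟩
  rw [hPlen]
  exact A.le_max' _ this

/-- extending a heavy side across a new edge -/
theorem crit_extend {S : Finset V} {s : ℕ} {p a c : V} (hpa : T.Adj a p) (hpS : p ∈ S)
    (hpc : T.Adj p c) (hc_notin : c ∉ comp T (S.erase p) a)
    (hA : s + 1 ≤ (comp T (S.erase p) a).card) :
    s + 1 ≤ (comp T (S.erase c) p).card := by
  have hsub : insert p (comp T (S.erase p) a) ⊆ comp T (S.erase c) p := by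
    intro z hz
    rcases Finset.mem_insert.1 hz with rfl | hz
    · exact mem_comp_self (Finset.mem_erase.2 ⟨hpc.ne, hpS⟩)
    · obtain ⟨w, hw⟩ := mem_comp.1 hz
      have hwsup : ∀ y ∈ w.support, y ∈ comp T (S.erase p) a := support_subset_comp w hw
      refine mem_comp.2 ⟨Walk.cons hpa.symm w, ?_⟩
      intro y hy
      rcases List.mem_cons.1 (by simpa using hy) with rfl | hy'
      · exact Finset.mem_erase.2 ⟨hpc.ne, hpS⟩
      · have hym := hwsup y hy'
        refine Finset.mem_erase.2 ⟨fun h => hc_notin (h ▸ hym), ?_⟩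
        exact (Finset.mem_erase.1 (comp_subset hym)).2
  have hpnot : p ∉ comp T (S.erase p) a := fun h => by
    simpa using (Finset.mem_erase.1 (comp_subset h)).1 rfl
  calc s + 1 ≤ (comp T (S.erase p) a).card := hA
  _ ≤ (insert p (comp T (S.erase p) a)).card := Finset.card_le_card (Finset.subset_insert _ _)
  _ ≤ (comp T (S.erase c) p).card := Finset.card_le_card hsub

end Dev4

section Dev5
variable {V : Type} [DecidableEq V] {T : SimpleGraph V}

theorem critpath_last_attach (hT : T.IsAcyclic) {S : Finset V} {s : ℕ} {P : List V}
    (hcp : CritPath T S s P) (hmax : ∀ Q, CritPath T S s Q → Q.length ≤ P.length)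
    {c x p : V} (hcS : c ∈ S) (hcP : c ∉ P)
    (hx : x ∈ comp T (S \ P.toFinset) c) (hadj : T.Adj x p)
    (hpne : P ≠ []) (hplast : p = P.getLast hpne)
    (heavy : s + 1 ≤ (comp T (S \ P.toFinset) c).card)
    (huniq : ∀ p' ∈ P, (∃ x' ∈ comp T (S \ P.toFinset) c, T.Adj x' p') → p' = p) : False := by
  obtain ⟨hnd, hmem, hch, hlen⟩ := hcp
  set n := P.length with hn
  have hn2 : 2 ≤ n := hlen
  have hin1 : n - 1 < n := by omega
  have hin2 : n - 2 < n := by omega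
  have hplast' : p = P.get ⟨n - 1, hin1⟩ := by
    rw [hplast]; exact List.getLast_eq_getElem hpne
  set a := P.get ⟨n - 2, hin2⟩ with ha
  have hcrit_ap : Crit T S s a p := by
    have h2 : n - 2 < n - 1 := by omega
    have := List.isChain_iff_getElem.1 hch (n - 2) (by omega)
    have heq : (⟨n - 2 + 1, by omega⟩ : Fin P.length) = ⟨n - 1, hin1⟩ := by
      apply Fin.ext; simp; omega
    simp only [show n - 2 + 1 = n - 1 by omega] at this
    rw [hplast']; exact this
  have hane : a ≠ p := by
    rw [hplast', ha]
    intro h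
    have := hnd.get_inj_iff.1 h
    simp at this; omega
  have haP : a ∈ P := by rw [ha]; exact List.get_mem _ _
  have hxC : comp T (S \ P.toFinset) x = comp T (S \ P.toFinset) c := comp_eq_of_mem hx
  have hxSP : x ∈ S \ P.toFinset := comp_subset hx
  have hxP : x ∉ P := fun h => (Finset.mem_sdiff.1 hxSP).2 (List.mem_toFinset.2 h)
  have hxS : x ∈ S := (Finset.mem_sdiff.1 hxSP).1
  have hpP : p ∈ P := by rw [hplast]; exact List.getLast_mem _
  have hpS : p ∈ S := hmem p hpP
  -- the component is a full component of S.erase p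
  have hE : comp T (S.erase p) x = comp T (S \ P.toFinset) x := by
    refine comp_erase_eq (F := P.toFinset) (fun z hz => hmem z (List.mem_toFinset.1 hz)) hxS
      (fun h => hxP (List.mem_toFinset.1 h)) (List.mem_toFinset.2 hpP) ?_
    intro p' hp' hex
    refine huniq p' (List.mem_toFinset.1 hp') ?_
    rwa [hxC] at hex
  have hx_notin_a : x ∉ comp T (S.erase p) a := by
    intro hmem'
    have : comp T (S.erase p) x = comp T (S.erase p) a := comp_eq_of_mem hmem'
    have haC : a ∈ comp T (S \ P.toFinset) c := by
      rw [← hxC, ← hE, this]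
      exact mem_comp_self (Finset.mem_erase.2 ⟨hane, hmem a haP⟩)
    exact (Finset.mem_sdiff.1 (comp_subset haC)).2 (List.mem_toFinset.2 haP)
  have hcrit_px : Crit T S s p x := by
    refine ⟨hadj.symm, hpS, hxS, ?_, ?_⟩
    · rw [hE, hxC]; exact heavy
    · exact crit_extend hcrit_ap.1 hpS hadj.symm hx_notin_a hcrit_ap.2.2.2.2
  have hQ : CritPath T S s (P ++ [x]) := by
    refine ⟨List.Nodup.append hnd (List.nodup_singleton x)
      (fun y hy hy' => by simp at hy'; exact hxP (hy' ▸ hy)), ?_, ?_, ?_⟩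
    · intro y hy
      rcases List.mem_append.1 hy with h | h
      · exact hmem y h
      · simp at h; exact h ▸ hxS
    · refine List.IsChain.append hch (List.isChain_singleton x) ?_
      intro y hy z hz
      simp at hz
      rw [List.getLast?_eq_getLast hpne] at hy
      simp at hy
      subst hz
      rw [← hy, ← hplast]
      exact hcrit_px
    · simp; omega
  have := hmax _ hQ
  simp at this; omega
end Dev5

section Dev6
variable {V : Type} [DecidableEq V] {T : SimpleGraph V}

theorem critpath_interior_attach (hT : T.IsAcyclic) {S : Finset V} {s : ℕ} {P : List V}
    (hcard : S.card ≤ 3*s+3) (hcp : CritPath T S s P)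
    {c x : V} {i : ℕ} (hi : i < P.length) (h0 : 0 < i) (hilast : i < P.length - 1)
    (hcS : c ∈ S) (hcP : c ∉ P)
    (hx : x ∈ comp T (S \ P.toFinset) c) (hadj : T.Adj x (P.get ⟨i, hi⟩))
    (heavy : s + 1 ≤ (comp T (S \ P.toFinset) c).card)
    (huniq : ∀ p' ∈ P, (∃ x' ∈ comp T (S \ P.toFinset) c, T.Adj x' p') → p' = P.get ⟨i, hi⟩) :
    False := by
  obtain ⟨hnd, hmem, hch, hlen⟩ := hcp
  set p := P.get ⟨i, hi⟩ with hp
  set a := P.get ⟨i - 1, by omega⟩ with ha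
  set b := P.get ⟨i + 1, by omega⟩ with hb
  have hcrit_ap : Crit T S s a p := by
    have h3 := List.isChain_iff_getElem.1 hch (i - 1) (by omega)
    have heq : (⟨i - 1 + 1, by omega⟩ : Fin P.length) = ⟨i, hi⟩ := by
      apply Fin.ext; simp; omega
    simp only [show i - 1 + 1 = i by omega] at h3; exact h3
  have hcrit_pb : Crit T S s p b := List.isChain_iff_getElem.1 hch i (by omega)
  have hane : a ≠ p := by
    intro h
    have h2 := hnd.get_inj_iff.1 h
    rw [Fin.mk.injEq] at h2
    omega
  have hbne : b ≠ p := by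
    intro h
    have h2 := hnd.get_inj_iff.1 h
    rw [Fin.mk.injEq] at h2
    omega
  have habne : a ≠ b := by
    intro h
    have h2 := hnd.get_inj_iff.1 h
    rw [Fin.mk.injEq] at h2
    omega
  have haP : a ∈ P := List.get_mem _ _
  have hbP : b ∈ P := List.get_mem _ _
  have hpP : p ∈ P := List.get_mem _ _
  have hpS : p ∈ S := hmem p hpP
  have hxC : comp T (S \ P.toFinset) x = comp T (S \ P.toFinset) c := comp_eq_of_mem hx
  have hxSP : x ∈ S \ P.toFinset := comp_subset hx
  have hxP : x ∉ P := fun h => (Finset.mem_sdiff.1 hxSP).2 (List.mem_toFinset.2 h)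
  have hxS : x ∈ S := (Finset.mem_sdiff.1 hxSP).1
  have hE : comp T (S.erase p) x = comp T (S \ P.toFinset) x := by
    refine comp_erase_eq (F := P.toFinset) (fun z hz => hmem z (List.mem_toFinset.1 hz)) hxS
      (fun h => hxP (List.mem_toFinset.1 h)) (List.mem_toFinset.2 hpP) ?_
    intro p' hp' hex
    refine huniq p' (List.mem_toFinset.1 hp') ?_
    rwa [hxC] at hex
  have hCP : ∀ z ∈ comp T (S.erase p) x, z ∉ P := by
    intro z hz hzP
    rw [hE, hxC] at hz
    exact (Finset.mem_sdiff.1 (comp_subset hz)).2 (List.mem_toFinset.2 hzP)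
  have haA : a ∈ comp T (S.erase p) a := mem_comp_self (Finset.mem_erase.2 ⟨hane, hmem a haP⟩)
  have hbB : b ∈ comp T (S.erase p) b := mem_comp_self (Finset.mem_erase.2 ⟨hbne, hmem b hbP⟩)
  have hAB : comp T (S.erase p) a ≠ comp T (S.erase p) b := by
    intro h
    have hbA : b ∈ comp T (S.erase p) a := h ▸ hbB
    exact habne (unique_nbr hT (by simp) haA hbA (hcrit_ap.1.symm) (hcrit_pb.1))
  have hAC : comp T (S.erase p) a ≠ comp T (S.erase p) x := fun h => hCP a (h ▸ haA) haP
  have hBC : comp T (S.erase p) b ≠ comp T (S.erase p) x := fun h => hCP b (h ▸ hbB) hbP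
  refine three_heavy_false hcard hpS (comp_subset) (comp_subset) (comp_subset)
    (comp_disjoint hAB) (comp_disjoint hAC) (comp_disjoint hBC)
    hcrit_ap.2.2.2.2 hcrit_pb.2.2.2.1 ?_
  rw [hE, hxC]
  exact heavy

theorem centroid_spine (hT : T.IsAcyclic) {S : Finset V} (hS : ConnSet T S)
    (hne : S.Nonempty) {s : ℕ} (hnocrit : ∀ u v : V, ¬ Crit T S s u v) :
    ∃ v ∈ S, ∀ c ∈ S.erase v, (comp T (S.erase v) c).card ≤ s := by
  obtain ⟨v, hv, hmin⟩ := Finset.exists_min_image S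
    (fun v => (S.erase v).sup (fun u => (comp T (S.erase v) u).card)) hne
  refine ⟨v, hv, ?_⟩
  intro c hc
  by_contra hbig
  push_neg at hbig
  have heavy : s + 1 ≤ (comp T (S.erase v) c).card := hbig
  have hcS : c ∈ S := (Finset.mem_erase.1 hc).2
  have hcv : c ∉ ({v} : Finset V) := by simp [(Finset.mem_erase.1 hc).1]
  obtain ⟨p, hpv, hpS, x, hx, hadj0⟩ := comp_attach hS (F := {v}) (by simp [hv])
    (Finset.singleton_nonempty v) hcS hcv
  have hpveq : p = v := by simpa using hpv
  rw [hpveq] at hadj0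
  have hadj : T.Adj x v := hadj0
  rw [← Finset.erase_eq] at hx
  have hxC : x ∈ comp T (S.erase v) c := hx
  have hCx : comp T (S.erase v) x = comp T (S.erase v) c := comp_eq_of_mem hx
  have hxSe : x ∈ S.erase v := comp_subset hxC
  have hxS : x ∈ S := (Finset.mem_erase.1 hxSe).2
  have hsmall : (comp T (S.erase x) v).card ≤ s := by
    by_contra hbig2
    push_neg at hbig2
    exact hnocrit v x ⟨hadj.symm, hv, hxS, by rw [hCx]; exact heavy, hbig2⟩
  have hCle : (comp T (S.erase v) c).card ≤
      (S.erase v).sup (fun u => (comp T (S.erase v) u).card) := by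
    have h4 : (comp T (S.erase v) x).card ≤
        (S.erase v).sup (fun u => (comp T (S.erase v) u).card) :=
      Finset.le_sup (f := fun u => (comp T (S.erase v) u).card) hxSe
    rwa [hCx] at h4
  have hsup_x : (S.erase x).sup (fun u => (comp T (S.erase x) u).card) ≤
      (comp T (S.erase v) c).card - 1 := by
    refine Finset.sup_le ?_
    intro y hy
    by_cases hyv : y ∈ comp T (S.erase x) v
    · have hcc : comp T (S.erase x) y = comp T (S.erase x) v := comp_eq_of_mem hyv
      simp only [hcc]
      omega
    · have hsub : comp T (S.erase x) y ⊆ (comp T (S.erase v) c).erase x := by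
        intro z hz
        have hzSe : z ∈ S.erase x := comp_subset hz
        have hzS : z ∈ S := (Finset.mem_erase.1 hzSe).2
        have hzx : z ≠ x := (Finset.mem_erase.1 hzSe).1
        rcases side_cover hT (hadj : T.Adj x v) (hS z hzS x hxS) with h1 | h1
        · exfalso
          have hzv : z ∈ comp T (S.erase x) v := mem_comp.2 h1
          have hcc : comp T (S.erase x) y = comp T (S.erase x) v := comp_eq_of_mem_both hz hzv
          exact hyv (hcc ▸ mem_comp_self hy)
        · have h5 : z ∈ comp T (S.erase v) x := mem_comp.2 h1
          rw [hCx] at h5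
          exact Finset.mem_erase.2 ⟨hzx, h5⟩
      calc (comp T (S.erase x) y).card ≤ ((comp T (S.erase v) c).erase x).card :=
            Finset.card_le_card hsub
      _ = (comp T (S.erase v) c).card - 1 := Finset.card_erase_of_mem hxC
  have h6 := hmin x hxS
  omega

end Dev6

section Dev7
variable {V : Type} [DecidableEq V] {T : SimpleGraph V}

theorem spine_exists (hT : T.IsAcyclic) {S : Finset V} (hS : ConnSet T S) (hne : S.Nonempty)
    {s : ℕ} (hcard : S.card ≤ 3*s+3) :
    ∃ P : List V, P ≠ [] ∧ P.Nodup ∧ P.Chain' T.Adj ∧ (∀ x ∈ P, x ∈ S) ∧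
      ∀ c ∈ S, c ∉ P → (comp T (S \ P.toFinset) c).card ≤ s := by
  by_cases hex : ∃ Q, CritPath T S s Q
  · obtain ⟨P, hcp, hmax⟩ := exists_max_critpath hex
    have hnd := hcp.1
    have hmem := hcp.2.1
    have hch := hcp.2.2.1
    have hlen := hcp.2.2.2
    have hPne : P ≠ [] := by intro h; rw [h] at hlen; simp at hlen
    refine ⟨P, hPne, hnd, hch.imp (fun a b hab => hab.1), hmem, ?_⟩
    intro c hcS hcP
    by_contra hbig
    push_neg at hbig
    have heavy : s + 1 ≤ (comp T (S \ P.toFinset) c).card := hbig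
    have hPS : P.toFinset ⊆ S := fun z hz => hmem z (List.mem_toFinset.1 hz)
    have hPFne : P.toFinset.Nonempty := by
      cases P with
      | nil => simp at hlen
      | cons h t => exact ⟨h, by simp⟩
    obtain ⟨p, hpP, hpS, x, hx, hadj⟩ :=
      comp_attach hS hPS hPFne hcS (fun h => hcP (List.mem_toFinset.1 h))
    have hpP' : p ∈ P := List.mem_toFinset.1 hpP
    have huniq : ∀ p' ∈ P, (∃ x' ∈ comp T (S \ P.toFinset) c, T.Adj x' p') → p' = p := by
      rintro p' hp' ⟨x', hx', hadj'⟩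
      by_contra hne'
      exact attach_two_false hT (connSet_toFinset_of_chain (hch.imp fun a b hab => hab.1))
        hne' (List.mem_toFinset.2 hp') hpP hx' hx hadj'.symm hadj
    obtain ⟨⟨i, hi⟩, hgi⟩ := List.mem_iff_get.1 hpP'
    by_cases h0 : 0 < i
    · by_cases hl : i < P.length - 1
      · exact critpath_interior_attach hT hcard ⟨hnd, hmem, hch, hlen⟩ hi h0 hl hcS hcP hx
          (by rw [hgi]; exact hadj) heavy (by rw [hgi]; exact huniq)
      · have hieq : i = P.length - 1 := by omega
        have hplast : p = P.getLast hPne := by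
          rw [List.getLast_eq_getElem, ← hgi]
          simp [hieq]
        exact critpath_last_attach hT hcp hmax hcS hcP hx hadj hPne hplast heavy huniq
    · have hieq : i = 0 := by omega
      have hcpR : CritPath T S s P.reverse := hcp.reverse
      have hmaxR : ∀ Q, CritPath T S s Q → Q.length ≤ P.reverse.length := by
        intro Q hQ; rw [List.length_reverse]; exact hmax Q hQ
      have hPneR : P.reverse ≠ [] := by
        intro h
        rw [← List.reverse_reverse P, h] at hPne
        exact hPne rfl
      have hcPR : c ∉ P.reverse := fun h => hcP (List.mem_reverse.1 h)
      have htf : P.reverse.toFinset = P.toFinset := List.toFinset_reverse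
      have hxR : x ∈ comp T (S \ P.reverse.toFinset) c := by rw [htf]; exact hx
      have heavyR : s + 1 ≤ (comp T (S \ P.reverse.toFinset) c).card := by rw [htf]; exact heavy
      have huniqR : ∀ p' ∈ P.reverse,
          (∃ x' ∈ comp T (S \ P.reverse.toFinset) c, T.Adj x' p') → p' = p := by
        intro p' hp' hexx
        rw [htf] at hexx
        exact huniq p' (List.mem_reverse.1 hp') hexx
      have hplastR : p = P.reverse.getLast hPneR := by
        rw [List.getLast_eq_getElem, ← hgi]
        simp [hieq]
      exact critpath_last_attach hT hcpR hmaxR hcS hcPR hxR hadj hPneR hplastR heavyR huniqR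
  · have hnocrit : ∀ u v : V, ¬ Crit T S s u v := by
      intro u v hc
      refine hex ⟨[u, v], ?_, ?_, ?_, by simp⟩
      · simp [hc.1.ne]
      · intro z hz
        rcases (by simpa using hz : z = u ∨ z = v) with rfl | rfl
        · exact hc.2.1
        · exact hc.2.2.1
      · exact List.isChain_pair.2 hc
    obtain ⟨v, hv, hcomp⟩ := centroid_spine hT hS hne hnocrit
    refine ⟨[v], by simp, by simp, List.isChain_singleton v, by simp [hv], ?_⟩
    intro c hcS hcP
    have hsd : S \ [v].toFinset = S.erase v := by rw [Finset.erase_eq]; simp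
    rw [hsd]
    exact hcomp c (Finset.mem_erase.2 ⟨by simpa using hcP, hcS⟩)

end Dev7

section Dev8
variable {V : Type} [DecidableEq V] {T : SimpleGraph V}

def Sandwich (v : V) (L : List (Finset V)) : Prop :=
  ∃ L1 L2 L3 : List (Finset V), L = L1 ++ L2 ++ L3 ∧ (∀ B ∈ L2, v ∈ B) ∧
    (∀ B ∈ L1, v ∉ B) ∧ (∀ B ∈ L3, v ∉ B)

def Good (T : SimpleGraph V) (S : Finset V) (k : ℕ) (L : List (Finset V)) : Prop :=
  (∀ B ∈ L, B ⊆ S) ∧ (∀ v ∈ S, ∃ B ∈ L, v ∈ B) ∧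
  (∀ u v : V, T.Adj u v → u ∈ S → v ∈ S → ∃ B ∈ L, u ∈ B ∧ v ∈ B) ∧
  (∀ v : V, Sandwich v L) ∧ (∀ B ∈ L, B.card ≤ k + 1)

theorem sandwich_of_forall_not {v : V} {L : List (Finset V)} (h : ∀ B ∈ L, v ∉ B) :
    Sandwich v L := ⟨[], [], L, by simp, by simp, by simp, h⟩

theorem sandwich_of_forall_mem {v : V} {L : List (Finset V)} (h : ∀ B ∈ L, v ∈ B) :
    Sandwich v L := ⟨[], L, [], by simp, h, by simp, by simp⟩

theorem Sandwich.append_right {v : V} {L M : List (Finset V)} (h : Sandwich v L)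
    (h' : ∀ B ∈ M, v ∉ B) : Sandwich v (L ++ M) := by
  obtain ⟨L1, L2, L3, rfl, h2, h1, h3⟩ := h
  refine ⟨L1, L2, L3 ++ M, by simp, h2, h1, ?_⟩
  intro B hB
  rcases List.mem_append.1 hB with hB | hB
  · exact h3 B hB
  · exact h' B hB

theorem Sandwich.append_left {v : V} {L M : List (Finset V)} (h' : ∀ B ∈ M, v ∉ B)
    (h : Sandwich v L) : Sandwich v (M ++ L) := by
  obtain ⟨L1, L2, L3, rfl, h2, h1, h3⟩ := h
  refine ⟨M ++ L1, L2, L3, by simp, h2, ?_, h3⟩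
  intro B hB
  rcases List.mem_append.1 hB with hB | hB
  · exact h' B hB
  · exact h1 B hB

theorem Sandwich.map_insert {v p : V} {L : List (Finset V)} (h : Sandwich v L) (hne : v ≠ p) :
    Sandwich v (L.map (insert p)) := by
  obtain ⟨L1, L2, L3, rfl, h2, h1, h3⟩ := h
  refine ⟨L1.map (insert p), L2.map (insert p), L3.map (insert p), by simp, ?_, ?_, ?_⟩
  · intro B hB
    obtain ⟨B', hB', rfl⟩ := List.mem_map.1 hB
    exact Finset.mem_insert.2 (Or.inr (h2 B' hB'))
  · intro B hB
    obtain ⟨B', hB', rfl⟩ := List.mem_map.1 hB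
    intro hvB
    rcases Finset.mem_insert.1 hvB with h | h
    · exact hne h
    · exact h1 B' hB' h
  · intro B hB
    obtain ⟨B', hB', rfl⟩ := List.mem_map.1 hB
    intro hvB
    rcases Finset.mem_insert.1 hvB with h | h
    · exact hne h
    · exact h3 B' hB' h

/-- combine good decompositions of pairwise disjoint sets -/
theorem good_disjUnion {k : ℕ} :
    ∀ (CS : List (Finset V)), CS.Pairwise (fun C D => Disjoint C D) →
    (∀ C ∈ CS, ∃ L, Good T C k L) →
    ∃ L : List (Finset V), (∀ B ∈ L, ∃ C ∈ CS, B ⊆ C) ∧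
      (∀ v : V, (∃ C ∈ CS, v ∈ C) → ∃ B ∈ L, v ∈ B) ∧
      (∀ u v : V, T.Adj u v → (∃ C ∈ CS, u ∈ C ∧ v ∈ C) → ∃ B ∈ L, u ∈ B ∧ v ∈ B) ∧
      (∀ v : V, Sandwich v L) ∧ (∀ B ∈ L, B.card ≤ k + 1) := by
  intro CS
  induction CS with
  | nil =>
    intro _ _
    exact ⟨[], by simp, by simp, by simp, fun v => sandwich_of_forall_not (by simp), by simp⟩
  | cons C CS' ih =>
    intro hdisj hgood
    obtain ⟨LC, hLC⟩ := hgood C (by simp)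
    obtain ⟨L', h'sub, h'cov, h'edge, h'sand, h'card⟩ :=
      ih (List.pairwise_cons.1 hdisj).2 (fun D hD => hgood D (by simp [hD]))
    have hdisjC : ∀ D ∈ CS', Disjoint C D := (List.pairwise_cons.1 hdisj).1
    obtain ⟨hsubC, hcovC, hedgeC, hsandC, hcardC⟩ := hLC
    refine ⟨LC ++ L', ?_, ?_, ?_, ?_, ?_⟩
    · intro B hB
      rcases List.mem_append.1 hB with hB | hB
      · exact ⟨C, by simp, hsubC B hB⟩
      · obtain ⟨D, hD, hBD⟩ := h'sub B hB
        exact ⟨D, by simp [hD], hBD⟩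
    · rintro v ⟨D, hD, hvD⟩
      rcases List.mem_cons.1 hD with rfl | hD'
      · obtain ⟨B, hB, hvB⟩ := hcovC v hvD
        exact ⟨B, by simp [hB], hvB⟩
      · obtain ⟨B, hB, hvB⟩ := h'cov v ⟨D, hD', hvD⟩
        exact ⟨B, by simp [hB], hvB⟩
    · rintro u v hadj ⟨D, hD, huD, hvD⟩
      rcases List.mem_cons.1 hD with rfl | hD'
      · obtain ⟨B, hB, hB'⟩ := hedgeC u v hadj huD hvD
        exact ⟨B, by simp [hB], hB'⟩
      · obtain ⟨B, hB, hB'⟩ := h'edge u v hadj ⟨D, hD', huD, hvD⟩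
        exact ⟨B, by simp [hB], hB'⟩
    · intro v
      by_cases hvC : v ∈ C
      · refine (hsandC v).append_right ?_
        intro B hB hvB
        obtain ⟨D, hD, hBD⟩ := h'sub B hB
        exact (Finset.disjoint_left.1 (hdisjC D hD)) hvC (hBD hvB)
      · refine Sandwich.append_left ?_ (h'sand v)
        intro B hB hvB
        exact hvC (hsubC B hB hvB)
    · intro B hB
      rcases List.mem_append.1 hB with hB | hB
      · exact hcardC B hB
      · exact h'card B hB

end Dev8

section Dev9
variable {V : Type} [DecidableEq V] {T : SimpleGraph V}

theorem block_build {k a : ℕ}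
    (HIH : ∀ C : Finset V, ConnSet T C → C.card ≤ a → ∃ L, Good T C k L)
    (p : V) (N : Finset V) (hpN : p ∈ N)
    (hcomps : ∀ y ∈ N.erase p, (comp T (N.erase p) y).card ≤ a) :
    ∃ Lb : List (Finset V), (∀ B ∈ Lb, B ⊆ N) ∧
      (∀ v ∈ N.erase p, ∃ B ∈ Lb, v ∈ B ∧ p ∈ B) ∧
      (∀ u v : V, T.Adj u v → u ∈ N.erase p → v ∈ N.erase p → ∃ B ∈ Lb, u ∈ B ∧ v ∈ B) ∧
      (∀ B ∈ Lb, p ∈ B) ∧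
      (∀ v : V, v ≠ p → Sandwich v Lb) ∧
      (∀ B ∈ Lb, B.card ≤ k + 2) := by
  classical
  set A := N.erase p with hA
  set CS := (A.image (fun y => comp T A y)).toList with hCS
  have hmemCS : ∀ C ∈ CS, ∃ y ∈ A, comp T A y = C := by
    intro C hC
    have := Finset.mem_toList.1 hC
    simpa using Finset.mem_image.1 this
  have hdisj : CS.Pairwise (fun C D => Disjoint C D) := by
    have hnd : CS.Nodup := Finset.nodup_toList _
    refine hnd.imp_of_mem ?_
    intro C D hC hD hne
    obtain ⟨y, hy, rfl⟩ := hmemCS C hC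
    obtain ⟨z, hz, rfl⟩ := hmemCS D hD
    exact comp_disjoint hne
  have hgood : ∀ C ∈ CS, ∃ L, Good T C k L := by
    intro C hC
    obtain ⟨y, hy, rfl⟩ := hmemCS C hC
    exact HIH _ (connSet_comp) (hcomps y hy)
  obtain ⟨Lc, hsub, hcov, hedge, hsand, hcard⟩ := good_disjUnion CS hdisj hgood
  refine ⟨Lc.map (insert p), ?_, ?_, ?_, ?_, ?_, ?_⟩
  · intro B hB
    obtain ⟨B', hB', rfl⟩ := List.mem_map.1 hB
    obtain ⟨C, hC, hBC⟩ := hsub B' hB'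
    obtain ⟨y, hy, rfl⟩ := hmemCS C hC
    intro z hz
    rcases Finset.mem_insert.1 hz with rfl | hz
    · exact hpN
    · exact (Finset.mem_erase.1 (comp_subset (hBC hz))).2
  · intro v hv
    have hvC : v ∈ comp T A v := mem_comp_self hv
    have hCmem : comp T A v ∈ CS := Finset.mem_toList.2 (Finset.mem_image.2 ⟨v, hv, rfl⟩)
    obtain ⟨B, hB, hvB⟩ := hcov v ⟨_, hCmem, hvC⟩
    exact ⟨insert p B, List.mem_map.2 ⟨B, hB, rfl⟩, Finset.mem_insert.2 (Or.inr hvB),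
      Finset.mem_insert_self _ _⟩
  · intro u v hadj hu hv
    have huC : u ∈ comp T A u := mem_comp_self hu
    have hvC : v ∈ comp T A u := comp_closed_adj huC hv hadj
    have hCmem : comp T A u ∈ CS := Finset.mem_toList.2 (Finset.mem_image.2 ⟨u, hu, rfl⟩)
    obtain ⟨B, hB, huB, hvB⟩ := hedge u v hadj ⟨_, hCmem, huC, hvC⟩
    exact ⟨insert p B, List.mem_map.2 ⟨B, hB, rfl⟩, Finset.mem_insert.2 (Or.inr huB),
      Finset.mem_insert.2 (Or.inr hvB)⟩
  · intro B hB
    obtain ⟨B', hB', rfl⟩ := List.mem_map.1 hB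
    exact Finset.mem_insert_self _ _
  · intro v hv
    exact (hsand v).map_insert hv
  · intro B hB
    obtain ⟨B', hB', rfl⟩ := List.mem_map.1 hB
    calc (insert p B').card ≤ B'.card + 1 := Finset.card_insert_le _ _
    _ ≤ k + 2 := by have := hcard B' hB'; omega

end Dev9

section Dev10
variable {V : Type} [DecidableEq V] {T : SimpleGraph V}

theorem inner_build (hT : T.IsAcyclic) {k a : ℕ}
    (HIH : ∀ C : Finset V, ConnSet T C → C.card ≤ a → ∃ L, Good T C k L) :
    ∀ (P : List V) (S' : Finset V), P ≠ [] → P.Nodup → P.Chain' T.Adj →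
      (∀ x ∈ P, x ∈ S') →
      (∀ c ∈ S', c ∉ P → (comp T (S' \ P.toFinset) c).card ≤ a) →
      ∃ L, Good T S' (k+1) L ∧
        ∃ L2 L3 : List (Finset V), L = L2 ++ L3 ∧ (∀ B ∈ L2, ∀ h ∈ P.head?, h ∈ B) ∧
          (∀ B ∈ L3, ∀ h ∈ P.head?, h ∉ B) := by
  intro P
  induction P with
  | nil => intro S' h; exact absurd rfl h
  | cons p P' ih =>
    intro S' hne hnd hch hmem hcomp
    have hpS : p ∈ S' := hmem p (by simp)
    cases P' with
    | nil =>
      -- single vertex spine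
      have hsd : S' \ [p].toFinset = S'.erase p := by rw [Finset.erase_eq]; simp
      have hcomps : ∀ y ∈ S'.erase p, (comp T (S'.erase p) y).card ≤ a := by
        intro y hy
        have h1 := hcomp y (Finset.mem_erase.1 hy).2 (by simp [(Finset.mem_erase.1 hy).1])
        rwa [hsd] at h1
      obtain ⟨Lb, hbsub, hbcov, hbedge, hbp, hbsand, hbcard⟩ :=
        block_build HIH p S' hpS hcomps
      refine ⟨Lb ++ [{p}], ⟨?_, ?_, ?_, ?_, ?_⟩, Lb ++ [{p}], [], by simp, ?_, by simp⟩
      · intro B hB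
        rcases List.mem_append.1 hB with hB | hB
        · exact hbsub B hB
        · simp at hB; subst hB; simpa using hpS
      · intro v hv
        by_cases hvp : v = p
        · exact ⟨{p}, by simp, by simp [hvp]⟩
        · obtain ⟨B, hB, hvB, _⟩ := hbcov v (Finset.mem_erase.2 ⟨hvp, hv⟩)
          exact ⟨B, by simp [hB], hvB⟩
      · intro u v hadj hu hv
        by_cases hup : u = p
        · subst hup
          obtain ⟨B, hB, hvB, hpB⟩ := hbcov v (Finset.mem_erase.2 ⟨fun h => hadj.ne h.symm, hv⟩)
          exact ⟨B, by simp [hB], hpB, hvB⟩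
        · by_cases hvp : v = p
          · subst hvp
            obtain ⟨B, hB, huB, hpB⟩ := hbcov u (Finset.mem_erase.2 ⟨hup, hu⟩)
            exact ⟨B, by simp [hB], huB, hpB⟩
          · obtain ⟨B, hB, hB'⟩ := hbedge u v hadj (Finset.mem_erase.2 ⟨hup, hu⟩)
              (Finset.mem_erase.2 ⟨hvp, hv⟩)
            exact ⟨B, by simp [hB], hB'⟩
      · intro v
        by_cases hvp : v = p
        · subst hvp
          refine sandwich_of_forall_mem ?_
          intro B hB
          rcases List.mem_append.1 hB with hB | hB
          · exact hbp B hB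
          · simp at hB; subst hB; simp
        · refine (hbsand v hvp).append_right ?_
          intro B hB
          simp at hB; subst hB; simp [hvp]
      · intro B hB
        rcases List.mem_append.1 hB with hB | hB
        · exact hbcard B hB
        · simp at hB; subst hB; simp
      · intro B hB h hh
        simp at hh; subst hh
        rcases List.mem_append.1 hB with hB | hB
        · exact hbp B hB
        · simp at hB; subst hB; simp
    | cons q P'' =>
      have hpq : T.Adj p q := (List.isChain_cons_cons.1 hch).1
      have hchP' : (q :: P'').Chain' T.Adj := (List.isChain_cons_cons.1 hch).2
      have hndP' : (q :: P'').Nodup := hnd.of_cons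
      have hpP' : p ∉ (q :: P'') := (List.nodup_cons.1 hnd).1
      have hqS : q ∈ S' := hmem q (by simp)
      have hqp : q ≠ p := fun h => hpP' (h ▸ (List.mem_cons_self (a := q) (l := P'')))
      obtain ⟨R, hR⟩ : ∃ R : Finset V, R = comp T (S'.erase p) q := ⟨_, rfl⟩
      have hqR : q ∈ R := by
        rw [hR]; exact mem_comp_self (Finset.mem_erase.2 ⟨hqp, hqS⟩)
      have hRsub : R ⊆ S'.erase p := by rw [hR]; exact comp_subset
      have hP'R : ∀ z ∈ (q :: P''), z ∈ R := by
        intro z hz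
        obtain ⟨w, hw⟩ := chain_walk hchP' ((List.mem_cons_self (a := q) (l := P''))) hz
        rw [hR]
        refine mem_comp.2 ⟨w, ?_⟩
        intro y hy
        have hyP' := hw y hy
        exact Finset.mem_erase.2 ⟨fun h => hpP' (h ▸ hyP'), hmem y (by simp [hyP'])⟩
      obtain ⟨N, hN⟩ : ∃ N : Finset V, N = S' \ R := ⟨_, rfl⟩
      have hpN : p ∈ N := by
        rw [hN]
        exact Finset.mem_sdiff.2 ⟨hpS, fun h => (Finset.mem_erase.1 (hRsub h)).1 rfl⟩
      have hAS : ∀ z ∈ N.erase p, z ∈ S' ∧ z ≠ p ∧ z ∉ R := by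
        intro z hz
        have h1 := Finset.mem_erase.1 hz
        rw [hN] at h1
        have h2 := Finset.mem_sdiff.1 h1.2
        exact ⟨h2.1, h1.1, h2.2⟩
      have hApart : ∀ z ∈ S', z ≠ p → z ∉ R → z ∈ N.erase p := by
        intro z h1 h2 h3
        rw [hN]
        exact Finset.mem_erase.2 ⟨h2, Finset.mem_sdiff.2 ⟨h1, h3⟩⟩
      have hANP : ∀ z ∈ N.erase p, z ∈ S' \ (p :: q :: P'').toFinset := by
        intro z hz
        obtain ⟨h1, h2, h3⟩ := hAS z hz
        refine Finset.mem_sdiff.2 ⟨h1, ?_⟩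
        intro h
        rcases List.mem_cons.1 (List.mem_toFinset.1 h) with h' | h'
        · exact h2 h'
        · exact h3 (hP'R z h')
      have hSPer : S' \ (p :: q :: P'').toFinset ⊆ S'.erase p := by
        intro z hz
        have h1 := Finset.mem_sdiff.1 hz
        refine Finset.mem_erase.2 ⟨?_, h1.1⟩
        intro h
        exact h1.2 (by simp [h])
      have hcompA : ∀ y ∈ N.erase p,
          comp T (N.erase p) y = comp T (S' \ (p :: q :: P'').toFinset) y := by
        intro y hy
        apply Finset.Subset.antisymm
        · exact comp_mono_of_mem hANP
        · intro w hw
          obtain ⟨wk, hwk⟩ := mem_comp.1 hw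
          refine mem_comp.2 ⟨wk, ?_⟩
          intro z hz
          have hzc : z ∈ comp T (S' \ (p :: q :: P'').toFinset) y :=
            support_subset_comp wk hwk z hz
          have hzS := Finset.mem_sdiff.1 (comp_subset hzc)
          have hzp : z ≠ p := fun h => hzS.2 (by simp [h])
          refine hApart z hzS.1 hzp ?_
          intro hzR
          have hconn : Conn T (S'.erase p) y z := (mem_comp.1 hzc).mono hSPer
          have h6 : y ∈ comp T (S'.erase p) z := mem_comp.2 hconn.symm
          rw [hR] at hzR
          rw [comp_eq_of_mem hzR, ← hR] at h6
          exact (hAS y hy).2.2 h6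
      have hcompsA : ∀ y ∈ N.erase p, (comp T (N.erase p) y).card ≤ a := by
        intro y hy
        rw [hcompA y hy]
        have h1 := hANP y hy
        have h2 := Finset.mem_sdiff.1 h1
        refine hcomp y h2.1 ?_
        intro h
        exact h2.2 (List.mem_toFinset.2 h)
      have hcompR : ∀ c ∈ R, c ∉ (q :: P'') → (comp T (R \ (q :: P'').toFinset) c).card ≤ a := by
        intro c hcR hcP'
        have hcS : c ∈ S' := (Finset.mem_erase.1 (hRsub hcR)).2
        have hcp : c ≠ p := (Finset.mem_erase.1 (hRsub hcR)).1
        have hcP : c ∉ (p :: q :: P'') := by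
          intro h
          rcases List.mem_cons.1 h with h | h
          · exact hcp h
          · exact hcP' h
        have hcRq : comp T (S'.erase p) c = R := by
          rw [hR] at hcR ⊢
          exact comp_eq_of_mem hcR
        have heq : comp T (R \ (q :: P'').toFinset) c
            = comp T (S' \ (p :: q :: P'').toFinset) c := by
          apply Finset.Subset.antisymm
          · apply comp_mono_of_mem
            intro z hz
            have h1 := Finset.mem_sdiff.1 hz
            have h2 := Finset.mem_erase.1 (hRsub h1.1)
            refine Finset.mem_sdiff.2 ⟨h2.2, ?_⟩
            intro h
            rcases List.mem_cons.1 (List.mem_toFinset.1 h) with h' | h'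
            · exact h2.1 h'
            · exact h1.2 (List.mem_toFinset.2 h')
          · intro w hw
            obtain ⟨wk, hwk⟩ := mem_comp.1 hw
            refine mem_comp.2 ⟨wk, ?_⟩
            intro z hz
            have hzc : z ∈ comp T (S' \ (p :: q :: P'').toFinset) c :=
              support_subset_comp wk hwk z hz
            have hzS := Finset.mem_sdiff.1 (comp_subset hzc)
            have hconn : Conn T (S'.erase p) c z := (mem_comp.1 hzc).mono hSPer
            have hzR : z ∈ R := by
              rw [← hcRq]
              exact mem_comp.2 hconn
            refine Finset.mem_sdiff.2 ⟨hzR, ?_⟩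
            intro h
            exact hzS.2 (List.mem_toFinset.2 (List.mem_cons_of_mem p (List.mem_toFinset.1 h)))
        rw [heq]
        exact hcomp c hcS hcP
      obtain ⟨Lr, hGr, L2r, L3r, hsplitr, hh2, hh3⟩ :=
        ih R (by simp) hndP' hchP' hP'R hcompR
      obtain ⟨hrsub, hrcov, hredge, hrsand, hrcard⟩ := hGr
      obtain ⟨Lb, hbsub, hbcov, hbedge, hbp, hbsand, hbcard⟩ :=
        block_build HIH p N hpN hcompsA
      have hbsubS : ∀ B ∈ Lb, ∀ z ∈ B, z ∉ R := by
        intro B hB z hz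
        have h7 := hbsub B hB hz
        rw [hN] at h7
        exact (Finset.mem_sdiff.1 h7).2
      have hbsubS' : ∀ B ∈ Lb, ∀ z ∈ B, z ∈ S' := by
        intro B hB z hz
        have h7 := hbsub B hB hz
        rw [hN] at h7
        exact (Finset.mem_sdiff.1 h7).1
      have hRS : ∀ z ∈ R, z ∈ S' := fun z hz => (Finset.mem_erase.1 (hRsub hz)).2
      have hRp : ∀ z ∈ R, z ≠ p := fun z hz => (Finset.mem_erase.1 (hRsub hz)).1
      refine ⟨(Lb ++ [{p, q}]) ++ Lr, ⟨?_, ?_, ?_, ?_, ?_⟩,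
        Lb ++ [{p, q}], Lr, rfl, ?_, ?_⟩
      · -- bags ⊆ S'
        intro B hB
        rcases List.mem_append.1 hB with hB | hB
        · rcases List.mem_append.1 hB with hB | hB
          · intro z hz
            exact hbsubS' B hB z hz
          · simp at hB; subst hB
            intro z hz
            rcases Finset.mem_insert.1 hz with rfl | hz
            · exact hpS
            · simp at hz; subst hz; exact hqS
        · intro z hz
          exact hRS z (hrsub B hB hz)
      · -- coverage
        intro v hv
        by_cases hvp : v = p
        · exact ⟨{p, q}, by simp, by simp [hvp]⟩
        · by_cases hvR : v ∈ R
          · obtain ⟨B, hB, hvB⟩ := hrcov v hvR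
            exact ⟨B, by simp [hB], hvB⟩
          · obtain ⟨B, hB, hvB, _⟩ := hbcov v (hApart v hv hvp hvR)
            exact ⟨B, by simp [hB], hvB⟩
      · -- edges
        intro u v hadj hu hv
        have symmCase : ∀ v', T.Adj p v' → v' ∈ R →
            ∃ B ∈ (Lb ++ [{p, q}]) ++ Lr, p ∈ B ∧ v' ∈ B := by
          intro v' hadj' hvR
          have hvR0 : v' ∈ comp T (S'.erase p) q := by rw [← hR]; exact hvR
          have hqR0 : q ∈ comp T (S'.erase p) q := by rw [← hR]; exact hqR
          have hvq : v' = q :=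
            (unique_nbr hT (A := S'.erase p) (by simp) hqR0 hvR0 hpq hadj').symm
          exact ⟨{p, q}, by simp, by simp, by simp [hvq]⟩
        by_cases hup : u = p
        · subst hup
          by_cases hvR : v ∈ R
          · exact symmCase v hadj hvR
          · obtain ⟨B, hB, hvB, hpB⟩ := hbcov v (hApart v hv (fun h => hadj.ne h.symm) hvR)
            exact ⟨B, by simp [hB], hpB, hvB⟩
        · by_cases hvp : v = p
          · subst hvp
            by_cases huR : u ∈ R
            · obtain ⟨B, hB, h1, h2⟩ := symmCase u hadj.symm huR
              exact ⟨B, hB, h2, h1⟩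
            · obtain ⟨B, hB, huB, hpB⟩ := hbcov u (hApart u hu hup huR)
              exact ⟨B, by simp [hB], huB, hpB⟩
          · by_cases huR : u ∈ R
            · by_cases hvR : v ∈ R
              · obtain ⟨B, hB, hB'⟩ := hredge u v hadj huR hvR
                exact ⟨B, by simp [hB], hB'⟩
              · exfalso
                refine hvR ?_
                rw [hR] at huR ⊢
                exact comp_closed_adj huR (Finset.mem_erase.2 ⟨hvp, hv⟩) hadj
            · by_cases hvR : v ∈ R
              · exfalso
                refine huR ?_
                rw [hR] at hvR ⊢
                exact comp_closed_adj hvR (Finset.mem_erase.2 ⟨hup, hu⟩) hadj.symm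
              · obtain ⟨B, hB, hB'⟩ := hbedge u v hadj (hApart u hu hup huR)
                  (hApart v hv hvp hvR)
                exact ⟨B, by simp [hB], hB'⟩
      · -- sandwich
        intro v
        by_cases hvS : v ∈ S'
        · by_cases hvp : v = p
          · subst hvp
            refine ⟨[], Lb ++ [{v, q}], Lr, by simp, ?_, by simp, ?_⟩
            · intro B hB
              rcases List.mem_append.1 hB with hB | hB
              · exact hbp B hB
              · simp at hB; subst hB; simp
            · intro B hB hpB
              exact hRp v (hrsub B hB hpB) rfl
          · by_cases hvq : v = q
            · refine ⟨Lb, [{p, q}] ++ L2r, L3r, by rw [hsplitr]; simp, ?_, ?_, ?_⟩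
              · intro B hB
                rcases List.mem_append.1 hB with hB | hB
                · simp at hB; subst hB; simp [hvq]
                · have := hh2 B hB q (by simp)
                  rwa [← hvq] at this
              · intro B hB hvB
                exact hbsubS B hB v hvB (by rw [hvq]; exact hqR)
              · intro B hB hvB
                have := hh3 B hB q (by simp)
                rw [← hvq] at this
                exact this hvB
            · by_cases hvR : v ∈ R
              · refine Sandwich.append_left ?_ (hrsand v)
                intro B hB hvB
                rcases List.mem_append.1 hB with hB | hB
                · exact hbsubS B hB v hvB hvR
                · simp at hB; subst hB
                  rcases Finset.mem_insert.1 hvB with h | h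
                  · exact hvp h
                  · simp at h; exact hvq h
              · refine ((hbsand v hvp).append_right ?_).append_right ?_
                · intro B hB hvB
                  simp at hB; subst hB
                  rcases Finset.mem_insert.1 hvB with h | h
                  · exact hvp h
                  · simp at h
                    exact hvR (h ▸ hqR)
                · intro B hB hvB
                  exact hvR (hrsub B hB hvB)
        · refine sandwich_of_forall_not ?_
          intro B hB hvB
          rcases List.mem_append.1 hB with hB | hB
          · rcases List.mem_append.1 hB with hB | hB
            · exact hvS (hbsubS' B hB v hvB)
            · simp at hB; subst hB
              rcases Finset.mem_insert.1 hvB with h | h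
              · exact hvS (h ▸ hpS)
              · simp at h; exact hvS (h ▸ hqS)
          · exact hvS (hRS v (hrsub B hB hvB))
      · -- sizes
        intro B hB
        rcases List.mem_append.1 hB with hB | hB
        · rcases List.mem_append.1 hB with hB | hB
          · exact hbcard B hB
          · simp at hB; subst hB
            have h8 : ({p, q} : Finset V).card ≤ 2 :=
              (Finset.card_insert_le _ _).trans (by simp)
            omega
        · exact hrcard B hB
      · -- head prefix: all bags of Lb ++ [{p,q}] contain p
        intro B hB h hh
        simp at hh; subst hh
        rcases List.mem_append.1 hB with hB | hB
        · exact hbp B hB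
        · simp at hB; subst hB; simp
      · -- Lr bags don't contain p
        intro B hB h hh
        simp at hh; subst hh
        intro hpB
        exact hRp _ (hrsub B hB hpB) rfl

end Dev10

section Dev11
variable {V : Type} [DecidableEq V] {T : SimpleGraph V}

def aBound : ℕ → ℕ
  | 0 => 1
  | (k+1) => 3 * aBound k + 3

theorem outer_build (hT : T.IsAcyclic) :
    ∀ (k : ℕ) (S : Finset V), ConnSet T S → S.card ≤ aBound k → ∃ L, Good T S k L := by
  intro k
  induction k with
  | zero =>
    intro S hconn hcard
    rcases Finset.eq_empty_or_nonempty S with rfl | ⟨v, hv⟩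
    · refine ⟨[], by simp, by simp, by simp, fun v => sandwich_of_forall_not (by simp), by simp⟩
    · have hS : S = {v} := by
        apply Finset.eq_singleton_iff_unique_mem.2
        refine ⟨hv, ?_⟩
        intro y hy
        have : S.card ≤ 1 := hcard
        exact Finset.card_le_one.1 this y hy v hv
      subst hS
      refine ⟨[{v}], by simp, ?_, ?_, ?_, by simp⟩
      · intro u hu
        simp at hu
        exact ⟨{v}, by simp, by simp [hu]⟩
      · intro u w hadj hu hw
        simp at hu hw
        rw [hu, hw] at hadj
        exact absurd hadj (T.loopless.irrefl v)
      · intro u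
        by_cases hu : u = v
        · exact sandwich_of_forall_mem (by simp [hu])
        · exact sandwich_of_forall_not (by simp [hu])
  | succ k ihk =>
    intro S hconn hcard
    rcases Finset.eq_empty_or_nonempty S with rfl | hS
    · refine ⟨[], by simp, by simp, by simp, fun v => sandwich_of_forall_not (by simp), by simp⟩
    · have hcard' : S.card ≤ 3 * aBound k + 3 := by simpa [aBound] using hcard
      obtain ⟨P, hPne, hnd, hch, hmem, hcomps⟩ := spine_exists hT hconn hS hcard'
      obtain ⟨L, hG, -⟩ := inner_build hT (fun C hC hc => ihk C hC hc) P S hPne hnd hch hmem hcomps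
      exact ⟨L, hG⟩

end Dev11

section Dev12
variable {V : Type} [DecidableEq V] [Fintype V] {T : SimpleGraph V}

theorem good_to_decomp {k : ℕ} {L : List (Finset V)} (hG : Good T Finset.univ k L) :
    ∃ (m : ℕ) (X : Fin m → Finset V), IsPathDecomp T m X ∧ ∀ i, (X i).card ≤ k + 1 := by
  obtain ⟨hsub, hcov, hedge, hsand, hcards⟩ := hG
  refine ⟨L.length, fun i => L.get i, ⟨?_, ?_, ?_⟩, ?_⟩
  · intro v
    obtain ⟨B, hB, hvB⟩ := hcov v (Finset.mem_univ v)
    obtain ⟨n, hn⟩ := List.mem_iff_get.1 hB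
    exact ⟨n, by show v ∈ L.get n; rw [hn]; exact hvB⟩
  · intro u v hadj
    obtain ⟨B, hB, hB'⟩ := hedge u v hadj (Finset.mem_univ u) (Finset.mem_univ v)
    obtain ⟨n, hn⟩ := List.mem_iff_get.1 hB
    refine ⟨n, by show u ∈ L.get n; rw [hn]; exact hB'.1,
      by show v ∈ L.get n; rw [hn]; exact hB'.2⟩
  · intro i j kk hij hjk v hvi hvk
    obtain ⟨L1, L2, L3, hLeq, h2, h1, h3⟩ := hsand v
    have hLeq' : L = L1 ++ (L2 ++ L3) := by rw [hLeq, List.append_assoc]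
    have hlen : L.length = L1.length + (L2.length + L3.length) := by
      rw [hLeq']; simp
    have hpos : ∀ (t : Fin L.length), v ∈ L.get t →
        L1.length ≤ t.1 ∧ t.1 < L1.length + L2.length := by
      intro t hvt
      rw [List.get_eq_getElem] at hvt
      rcases lt_or_ge t.1 L1.length with hlt | hge
      · exfalso
        have he : L[t.1] = L1[t.1]'hlt := by
          rw [List.getElem_of_eq hLeq' t.2]
          exact List.getElem_append_left hlt
        rw [he] at hvt
        exact h1 _ (List.getElem_mem hlt) hvt
      · rcases lt_or_ge t.1 (L1.length + L2.length) with hlt2 | hge2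
        · exact ⟨hge, hlt2⟩
        · exfalso
          have ht3 : t.1 - L1.length - L2.length < L3.length := by
            have := t.2
            omega
          have he : L[t.1] = L3[t.1 - L1.length - L2.length]'ht3 := by
            rw [List.getElem_of_eq hLeq' t.2]
            rw [List.getElem_append_right (by omega : L1.length ≤ t.1)]
            rw [List.getElem_append_right (by omega : L2.length ≤ t.1 - L1.length)]
          rw [he] at hvt
          exact h3 _ (List.getElem_mem ht3) hvt
    have hi' := hpos i hvi
    have hk' := hpos kk hvk
    have hj1 : L1.length ≤ j.1 := le_trans hi'.1 hij
    have hj2 : j.1 < L1.length + L2.length := lt_of_le_of_lt hjk hk'.2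
    have ht2 : j.1 - L1.length < L2.length := by omega
    have he : L[j.1]'j.2 = L2[j.1 - L1.length]'ht2 := by
      rw [List.getElem_of_eq hLeq' j.2]
      rw [List.getElem_append_right hj1]
      exact List.getElem_append_left ht2
    show v ∈ L.get j
    rw [List.get_eq_getElem, he]
    exact h2 _ (List.getElem_mem ht2)
  · intro i
    exact hcards _ (List.get_mem _ _)

end Dev12

theorem aux_tree_pathwidth_card
    {V : Type} [Fintype V] (T : SimpleGraph V) (hT : T.IsTree)
    (h : 3 ≤ pathwidth T) : 22 ≤ Fintype.card V := by
  by_contra hcon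
  push_neg at hcon
  haveI := Classical.decEq V
  have hconn : ConnSet T Finset.univ := by
    intro a _ b _
    obtain ⟨w⟩ := hT.isConnected.preconnected a b
    exact ⟨w, fun x _ => Finset.mem_univ x⟩
  have hcard : (Finset.univ : Finset V).card ≤ aBound 2 := by
    have h21 : aBound 2 = 21 := by norm_num [aBound]
    rw [h21, Finset.card_univ]
    omega
  obtain ⟨L, hG⟩ := outer_build hT.IsAcyclic 2 Finset.univ hconn hcard
  obtain ⟨m, X, hdec, hbags⟩ := good_to_decomp hG
  have h2 : 2 ∈ {w | ∃ (m : ℕ) (X : Fin m → Finset V),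
      IsPathDecomp T m X ∧ ∀ i, (X i).card ≤ w + 1} := ⟨m, X, hdec, hbags⟩
  have hle : pathwidth T ≤ 2 := Nat.sInf_le h2
  exact Nat.lt_irrefl 2 (lt_of_lt_of_le (lt_of_lt_of_le (by norm_num) h) hle)

/-- Every tree with pathwidth at least 3 has at least 22 vertices. -/
theorem tree_pathwidth_ge_three_card
    {V : Type} [Fintype V] (T : SimpleGraph V) (hT : T.IsTree)
    (h : 3 ≤ pathwidth T) : 22 ≤ Fintype.card V := by
  exact aux_tree_pathwidth_card T hT h
end
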